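/- arXiv:2205.07599 — 4 statements merged into one kernel-verified Lean document; each statement's English description precedes it below -/
import Mathlib

section
/- Let p > 1, γ > 0, 0 < α ≤ 1, 0 < β ≤ 1, and −1 < μ, ν < p−1. If p(γ−1) − (μ−ν) ≥ 0 (equivalently γ ≥ 1 + (μ−ν)/p), then the generalized multiplicative Hilbert operator H^{μ,ν}_{p,α,β,γ} is bounded on l^p. -/
open scoped ENNReal

/-- The `l^p` norm of a sequence indexed from `n = 2` (entry `n` of the abstract
sequence corresponds to `a (n)`, and we sum over `n ≥ 2` via the shift `n + 2`). -/
noncomputable def lpNorm (p : ℝ) (a : ℕ → ℂ) : ℝ≥0∞ :=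
  (∑' n : ℕ, (‖a (n + 2)‖₊ : ℝ≥0∞) ^ p) ^ (1 / p)

/-- The generalized multiplicative Hilbert operator `H^{μ,ν}_{p,α,β,γ}`, where `q = p'`
is the conjugate exponent of `p`. -/
noncomputable def genH (p q α β γ μ ν : ℝ) (a : ℕ → ℂ) : ℕ → ℂ := fun m =>
  ((Real.log m ^ (((α - 1) + α * μ) / p) / (m : ℝ) ^ (1 / p) : ℝ) : ℂ) *
    ∑' n : ℕ,
      ((Real.log ((n : ℝ) + 2) ^ (((β - 1) - (q - 1) * β * ν) / q) /
          (((n : ℝ) + 2) ^ (1 / q) *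
            (Real.log m ^ α + Real.log ((n : ℝ) + 2) ^ β) ^ γ) : ℝ) : ℂ) *
        a (n + 2)

open MeasureTheory Set


lemma log_gap (n : ℕ) :
    1 / ((n:ℝ) + 2) ≤ Real.log ((n:ℝ) + 2) - Real.log ((n:ℝ) + 1) := by
  have h1 : (0:ℝ) < (n:ℝ) + 1 := by positivity
  have h2 : (0:ℝ) < (n:ℝ) + 2 := by positivity
  have := Real.log_le_sub_one_of_pos (show (0:ℝ) < ((n:ℝ)+1)/((n:ℝ)+2) by positivity)
  rw [Real.log_div h1.ne' h2.ne'] at this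
  have h3 : ((n:ℝ)+1)/((n:ℝ)+2) - 1 = -(1/((n:ℝ)+2)) := by
    field_simp
    norm_num
  linarith [this, h3.le]

lemma sum_le_lintegral (f : ℝ → ℝ) (hf : AntitoneOn f (Set.Ioi 0))
    (hf0 : ∀ x ∈ Set.Ioi (0:ℝ), 0 ≤ f x) :
    ∑' n : ℕ, ENNReal.ofReal (f (Real.log ((n:ℝ)+2)) / ((n:ℝ)+2)) ≤
      ∫⁻ s in Set.Ioi (0:ℝ), ENNReal.ofReal (f s) := by
  set I : ℕ → Set ℝ := fun n => Ioc (Real.log ((n:ℝ)+1)) (Real.log ((n:ℝ)+2)) with hI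
  have hIm : ∀ n, MeasurableSet (I n) := fun n => measurableSet_Ioc
  have hlog_mono : ∀ n : ℕ, Real.log ((n:ℝ)+1) < Real.log ((n:ℝ)+2) := fun n =>
    Real.log_lt_log (by positivity) (by linarith)
  have hsub : ∀ n, I n ⊆ Ioi (0:ℝ) := by
    intro n x hx
    have : (0:ℝ) ≤ Real.log ((n:ℝ)+1) := Real.log_nonneg (by linarith)
    exact lt_of_le_of_lt this hx.1
  have hdisj : Pairwise (Function.onFun Disjoint I) := by
    intro m n hmn
    have key : ∀ a b : ℕ, a < b → Disjoint (I a) (I b) := by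
      intro a b hab
      rw [Set.Ioc_disjoint_Ioc]
      refine le_trans (min_le_left _ _) (le_trans ?_ (le_max_right _ _))
      apply Real.log_le_log (by positivity)
      have : (a:ℝ) + 1 ≤ (b:ℝ) := by exact_mod_cast Nat.succ_le_of_lt hab
      linarith
    rcases lt_or_gt_of_ne hmn with h | h
    · exact key _ _ h
    · exact (key _ _ h).symm
  -- each term is at most the integral over I n
  have hterm : ∀ n : ℕ, ENNReal.ofReal (f (Real.log ((n:ℝ)+2)) / ((n:ℝ)+2)) ≤
      ∫⁻ s in I n, ENNReal.ofReal (f s) := by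
    intro n
    have hLpos : (0:ℝ) < Real.log ((n:ℝ)+2) := Real.log_pos (by linarith)
    have hle : ∀ s ∈ I n, ENNReal.ofReal (f (Real.log ((n:ℝ)+2))) ≤ ENNReal.ofReal (f s) := by
      intro s hs
      exact ENNReal.ofReal_le_ofReal (hf (hsub n hs) (by exact hLpos) hs.2)
    calc ENNReal.ofReal (f (Real.log ((n:ℝ)+2)) / ((n:ℝ)+2))
        = ENNReal.ofReal (f (Real.log ((n:ℝ)+2))) * ENNReal.ofReal (1/((n:ℝ)+2)) := by
          rw [← ENNReal.ofReal_mul (hf0 _ hLpos)]; ring_nf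
      _ ≤ ENNReal.ofReal (f (Real.log ((n:ℝ)+2))) * volume (I n) := by
          apply mul_le_mul_right
          rw [hI]
          simp only [Real.volume_Ioc]
          exact ENNReal.ofReal_le_ofReal (log_gap n)
      _ = ∫⁻ _ in I n, ENNReal.ofReal (f (Real.log ((n:ℝ)+2))) := by
          rw [setLIntegral_const]
      _ ≤ ∫⁻ s in I n, ENNReal.ofReal (f s) := setLIntegral_mono' (hIm n) hle
  calc ∑' n : ℕ, ENNReal.ofReal (f (Real.log ((n:ℝ)+2)) / ((n:ℝ)+2))
      ≤ ∑' n : ℕ, ∫⁻ s in I n, ENNReal.ofReal (f s) := ENNReal.tsum_le_tsum hterm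
    _ = ∫⁻ s in ⋃ n, I n, ENNReal.ofReal (f s) := (lintegral_iUnion hIm hdisj _).symm
    _ ≤ ∫⁻ s in Ioi (0:ℝ), ENNReal.ofReal (f s) :=
        lintegral_mono_set (Set.iUnion_subset hsub)

lemma lintegral_core (e δ γ M : ℝ) (he : -1 < e) (hδ : 0 < δ) (hγ : 0 < γ)
    (hM : 0 < M) (hconv : e + 1 < δ * γ) :
    ∫⁻ s in Ioi (0:ℝ), ENNReal.ofReal (s ^ e * (M + s ^ δ) ^ (-γ)) ≤
      ENNReal.ofReal ((1/(e+1) + 1/(δ*γ - (e+1))) * M ^ ((e+1)/δ - γ)) := by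
  have he1 : (0:ℝ) < e + 1 := by linarith
  set T : ℝ := M ^ (1/δ) with hTdef
  have hT0 : 0 < T := Real.rpow_pos_of_pos hM _
  have hTpow : ∀ r : ℝ, T ^ r = M ^ (r / δ) := by
    intro r
    rw [hTdef, ← Real.rpow_mul hM.le]
    congr 1
    field_simp
  -- split the domain
  have hsplit : (Ioi (0:ℝ)) = Ioc 0 T ∪ Ioi T := (Set.Ioc_union_Ioi_eq_Ioi hT0.le).symm
  rw [hsplit, lintegral_union measurableSet_Ioi Set.Ioc_disjoint_Ioi_same]
  -- part 1
  have part1 : ∫⁻ s in Ioc (0:ℝ) T, ENNReal.ofReal (s ^ e * (M + s ^ δ) ^ (-γ)) ≤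
      ENNReal.ofReal ((1/(e+1)) * M ^ ((e+1)/δ - γ)) := by
    have hbound : ∀ s ∈ Ioc (0:ℝ) T, ENNReal.ofReal (s ^ e * (M + s ^ δ) ^ (-γ)) ≤
        ENNReal.ofReal (M ^ (-γ) * s ^ e) := by
      intro s hs
      apply ENNReal.ofReal_le_ofReal
      rw [mul_comm]
      apply mul_le_mul_of_nonneg_right _ (Real.rpow_nonneg hs.1.le _)
      exact Real.rpow_le_rpow_of_nonpos hM
        (le_add_of_nonneg_right (Real.rpow_nonneg hs.1.le δ)) (by linarith)
    calc ∫⁻ s in Ioc (0:ℝ) T, ENNReal.ofReal (s ^ e * (M + s ^ δ) ^ (-γ))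
        ≤ ∫⁻ s in Ioc (0:ℝ) T, ENNReal.ofReal (M ^ (-γ) * s ^ e) :=
          setLIntegral_mono' measurableSet_Ioc hbound
      _ = ENNReal.ofReal (∫ s in Ioc (0:ℝ) T, M ^ (-γ) * s ^ e) := by
          rw [ofReal_integral_eq_lintegral_ofReal]
          · apply Integrable.const_mul
            exact (intervalIntegrable_iff_integrableOn_Ioc_of_le hT0.le).1
              (intervalIntegral.intervalIntegrable_rpow' he)
          · filter_upwards [ae_restrict_mem measurableSet_Ioc] with s hs
            have := Real.rpow_nonneg hs.1.le e
            positivity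
      _ = ENNReal.ofReal (M ^ (-γ) * (T ^ (e+1) / (e+1))) := by
          congr 1
          rw [MeasureTheory.integral_const_mul, ← intervalIntegral.integral_of_le hT0.le,
            integral_rpow (Or.inl he), Real.zero_rpow he1.ne', sub_zero]
      _ = ENNReal.ofReal ((1/(e+1)) * M ^ ((e+1)/δ - γ)) := by
          congr 1
          rw [hTpow (e+1), div_eq_mul_inv, ← mul_assoc, ← Real.rpow_add hM,
            show -γ + (e+1)/δ = (e+1)/δ - γ by ring]
          ring
  -- part 2
  have hlt : e - δ*γ < -1 := by linarith
  have part2 : ∫⁻ s in Ioi T, ENNReal.ofReal (s ^ e * (M + s ^ δ) ^ (-γ)) ≤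
      ENNReal.ofReal ((1/(δ*γ - (e+1))) * M ^ ((e+1)/δ - γ)) := by
    have hbound : ∀ s ∈ Ioi T, ENNReal.ofReal (s ^ e * (M + s ^ δ) ^ (-γ)) ≤
        ENNReal.ofReal (s ^ (e - δ*γ)) := by
      intro s hs
      have hs0 : (0:ℝ) < s := lt_trans hT0 hs
      apply ENNReal.ofReal_le_ofReal
      have h1 : (M + s ^ δ) ^ (-γ) ≤ (s ^ δ) ^ (-γ) :=
        Real.rpow_le_rpow_of_nonpos (Real.rpow_pos_of_pos hs0 _) (by linarith) (by linarith)
      have h2 : (s ^ δ) ^ (-γ) = s ^ (-(δ*γ)) := by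
        rw [← Real.rpow_mul hs0.le]; ring_nf
      calc s ^ e * (M + s ^ δ) ^ (-γ) ≤ s ^ e * s ^ (-(δ*γ)) := by
            rw [← h2]; exact mul_le_mul_of_nonneg_left h1 (Real.rpow_nonneg hs0.le _)
        _ = s ^ (e - δ*γ) := by rw [← Real.rpow_add hs0]; ring_nf
    calc ∫⁻ s in Ioi T, ENNReal.ofReal (s ^ e * (M + s ^ δ) ^ (-γ))
        ≤ ∫⁻ s in Ioi T, ENNReal.ofReal (s ^ (e - δ*γ)) :=
          setLIntegral_mono' measurableSet_Ioi hbound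
      _ = ENNReal.ofReal (∫ s in Ioi T, s ^ (e - δ*γ)) := by
          rw [ofReal_integral_eq_lintegral_ofReal (integrableOn_Ioi_rpow_of_lt hlt hT0)]
          filter_upwards [ae_restrict_mem measurableSet_Ioi] with s hs
          exact Real.rpow_nonneg (lt_trans hT0 hs).le _
      _ = ENNReal.ofReal ((1/(δ*γ - (e+1))) * M ^ ((e+1)/δ - γ)) := by
          rw [integral_Ioi_rpow_of_lt hlt hT0]
          congr 1
          rw [hTpow (e - δ*γ + 1),
            show (e - δ*γ + 1)/δ = (e+1)/δ - γ by field_simp; ring]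
          have h1 : e - δ*γ + 1 ≠ 0 := by linarith
          have h2 : δ*γ - (e+1) ≠ 0 := by linarith
          field_simp
          ring
  calc (∫⁻ s in Ioc (0:ℝ) T, ENNReal.ofReal (s ^ e * (M + s ^ δ) ^ (-γ))) +
        ∫⁻ s in Ioi T, ENNReal.ofReal (s ^ e * (M + s ^ δ) ^ (-γ))
      ≤ ENNReal.ofReal ((1/(e+1)) * M ^ ((e+1)/δ - γ)) +
        ENNReal.ofReal ((1/(δ*γ - (e+1))) * M ^ ((e+1)/δ - γ)) := add_le_add part1 part2
    _ = ENNReal.ofReal ((1/(e+1) + 1/(δ*γ - (e+1))) * M ^ ((e+1)/δ - γ)) := by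
        rw [← ENNReal.ofReal_add
          (mul_nonneg (by positivity) (Real.rpow_nonneg hM.le _))
          (mul_nonneg (one_div_nonneg.2 (by linarith)) (Real.rpow_nonneg hM.le _))]
        congr 1
        ring

lemma side_sum (e δ γ M : ℝ) (he : -1 < e) (he2 : e ≤ 0) (hδ : 0 < δ) (hγ : 0 < γ)
    (hM : 0 < M) (hconv : e + 1 < δ * γ) :
    ∑' n : ℕ, ENNReal.ofReal
        (Real.log ((n:ℝ)+2) ^ e * (M + Real.log ((n:ℝ)+2) ^ δ) ^ (-γ) / ((n:ℝ)+2)) ≤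
      ENNReal.ofReal ((1/(e+1) + 1/(δ*γ - (e+1))) * M ^ ((e+1)/δ - γ)) := by
  set f : ℝ → ℝ := fun s => s ^ e * (M + s ^ δ) ^ (-γ) with hf
  have hf0 : ∀ x ∈ Set.Ioi (0:ℝ), 0 ≤ f x := by
    intro x hx
    have hx0 : (0:ℝ) < x := hx
    have h1 := Real.rpow_nonneg hx0.le e
    have h2 : (0:ℝ) ≤ (M + x ^ δ) ^ (-γ) :=
      Real.rpow_nonneg (by positivity) _
    exact mul_nonneg h1 h2
  have hanti : AntitoneOn f (Set.Ioi 0) := by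
    intro x hx y hy hxy
    have hx0 : (0:ℝ) < x := hx
    have hy0 : (0:ℝ) < y := hy
    have h1 : y ^ e ≤ x ^ e := Real.rpow_le_rpow_of_nonpos hx0 hxy he2
    have h2 : (M + y ^ δ) ^ (-γ) ≤ (M + x ^ δ) ^ (-γ) := by
      apply Real.rpow_le_rpow_of_nonpos (by positivity)
        (by have := Real.rpow_le_rpow hx0.le hxy hδ.le; linarith) (by linarith)
    exact mul_le_mul h1 h2 (Real.rpow_nonneg (by positivity) _) (Real.rpow_nonneg hx0.le _)
  calc ∑' n : ℕ, ENNReal.ofReal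
          (Real.log ((n:ℝ)+2) ^ e * (M + Real.log ((n:ℝ)+2) ^ δ) ^ (-γ) / ((n:ℝ)+2))
      = ∑' n : ℕ, ENNReal.ofReal (f (Real.log ((n:ℝ)+2)) / ((n:ℝ)+2)) := rfl
    _ ≤ ∫⁻ s in Set.Ioi (0:ℝ), ENNReal.ofReal (f s) := sum_le_lintegral f hanti hf0
    _ ≤ ENNReal.ofReal ((1/(e+1) + 1/(δ*γ - (e+1))) * M ^ ((e+1)/δ - γ)) :=
        lintegral_core e δ γ M he hδ hγ hM hconv

noncomputable def kern (p q α β γ μ ν : ℝ) (m n : ℕ) : ℝ :=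
  (Real.log ((m:ℝ)+2) ^ (((α - 1) + α * μ) / p) / ((m:ℝ)+2) ^ (1/p)) *
  (Real.log ((n:ℝ)+2) ^ (((β - 1) - (q - 1) * β * ν) / q) /
    (((n:ℝ)+2) ^ (1/q) * (Real.log ((m:ℝ)+2) ^ α + Real.log ((n:ℝ)+2) ^ β) ^ γ))

noncomputable def wt (p q : ℝ) (n : ℕ) : ℝ :=
  Real.log ((n:ℝ)+2) ^ (-(1/(p*q))) * ((n:ℝ)+2) ^ (-(1/(p*q)))

lemma log_add2_pos (n : ℕ) : 0 < Real.log ((n:ℝ)+2) :=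
  Real.log_pos (by push_cast; linarith [Nat.cast_nonneg (α := ℝ) n])

lemma log2_le_log_add2 (n : ℕ) : Real.log 2 ≤ Real.log ((n:ℝ)+2) :=
  Real.log_le_log (by norm_num) (by linarith [Nat.cast_nonneg (α := ℝ) n])

lemma kern_nonneg (p q α β γ μ ν : ℝ) (m n : ℕ) : 0 ≤ kern p q α β γ μ ν m n := by
  unfold kern
  have h1 := (log_add2_pos m).le
  have h2 := (log_add2_pos n).le
  have h3 : (0:ℝ) ≤ ((m:ℝ)+2) := by positivity
  have h4 : (0:ℝ) ≤ ((n:ℝ)+2) := by positivity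
  positivity

lemma wt_pos (p q : ℝ) (n : ℕ) : 0 < wt p q n := by
  unfold wt
  have h1 := log_add2_pos n
  have h2 : (0:ℝ) < ((n:ℝ)+2) := by positivity
  positivity

lemma nnnorm_tsum_le_ennreal (g : ℕ → ℂ) :
    (‖∑' n, g n‖₊ : ℝ≥0∞) ≤ ∑' n, (‖g n‖₊ : ℝ≥0∞) := by
  by_cases h : Summable fun n => ‖g n‖
  · have hg : Summable g := Summable.of_norm h
    calc (‖∑' n, g n‖₊ : ℝ≥0∞) = ENNReal.ofReal ‖∑' n, g n‖ :=
          (ofReal_norm _).symm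
      _ ≤ ENNReal.ofReal (∑' n, ‖g n‖) :=
          ENNReal.ofReal_le_ofReal (norm_tsum_le_tsum_norm h)
      _ = ∑' n, ENNReal.ofReal ‖g n‖ :=
          ENNReal.ofReal_tsum_of_nonneg (fun n => norm_nonneg _) h
      _ = ∑' n, (‖g n‖₊ : ℝ≥0∞) := by
          congr 1; funext n; exact (ofReal_norm _)
  · have : (∑' n, (‖g n‖₊ : ℝ≥0∞)) = ⊤ := by
      by_contra hne
      exact h (by
        have := ENNReal.tsum_coe_ne_top_iff_summable.1 hne
        exact (NNReal.summable_coe.2 this).congr (fun n => rfl))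
    rw [this]; exact le_top

lemma nnnorm_real_coe (x : ℝ) (hx : 0 ≤ x) : (‖(x:ℂ)‖₊ : ℝ≥0∞) = ENNReal.ofReal x := by
  rw [← enorm_eq_nnnorm, ← ofReal_norm, Complex.norm_real, Real.norm_of_nonneg hx]

lemma pointwise_bound (p q α β γ μ ν : ℝ) (a : ℕ → ℂ) (m : ℕ) :
    (‖genH p q α β γ μ ν a (m+2)‖₊ : ℝ≥0∞) ≤
      ∑' n, ENNReal.ofReal (kern p q α β γ μ ν m n) * (‖a (n+2)‖₊ : ℝ≥0∞) := by
  have hcast : ((m+2:ℕ):ℝ) = (m:ℝ)+2 := by push_cast; ring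
  set c : ℝ := Real.log ((m:ℝ)+2) ^ (((α - 1) + α * μ) / p) / ((m:ℝ)+2) ^ (1/p) with hc
  set w : ℕ → ℝ := fun n => Real.log ((n:ℝ)+2) ^ (((β - 1) - (q - 1) * β * ν) / q) /
    (((n:ℝ)+2) ^ (1/q) * (Real.log ((m:ℝ)+2) ^ α + Real.log ((n:ℝ)+2) ^ β) ^ γ) with hw
  have hc0 : 0 ≤ c := by
    rw [hc]
    have := (log_add2_pos m).le
    positivity
  have hw0 : ∀ n, 0 ≤ w n := by
    intro n
    rw [hw]
    have h2 := (log_add2_pos n).le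
    have h1 := (log_add2_pos m).le
    positivity
  have hgen : genH p q α β γ μ ν a (m+2) = (c:ℂ) * ∑' n, ((w n : ℝ):ℂ) * a (n+2) := by
    rw [genH, hcast]
  calc (‖genH p q α β γ μ ν a (m+2)‖₊ : ℝ≥0∞)
      = (‖(c:ℂ)‖₊ : ℝ≥0∞) * (‖∑' n, ((w n : ℝ):ℂ) * a (n+2)‖₊ : ℝ≥0∞) := by
        rw [hgen, nnnorm_mul, ENNReal.coe_mul]
    _ ≤ (‖(c:ℂ)‖₊ : ℝ≥0∞) * ∑' n, (‖((w n : ℝ):ℂ) * a (n+2)‖₊ : ℝ≥0∞) :=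
        mul_le_mul_right (nnnorm_tsum_le_ennreal _) _
    _ = ∑' n, ENNReal.ofReal (kern p q α β γ μ ν m n) * (‖a (n+2)‖₊ : ℝ≥0∞) := by
        rw [← ENNReal.tsum_mul_left]
        congr 1; funext n
        rw [nnnorm_mul, ENNReal.coe_mul, ← mul_assoc, nnnorm_real_coe _ hc0,
          nnnorm_real_coe _ (hw0 n), ← ENNReal.ofReal_mul hc0]
        rfl

lemma inner_identity (Ln n' X B pp qq γ : ℝ) (hLn : 0 < Ln) (hn : 0 < n') (hX : 0 < X)
    (hpq : 1/qq + 1/pp = 1) :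
    (Ln ^ B / (n' ^ (1/qq) * X ^ γ)) * (Ln ^ (-(1/pp)) * n' ^ (-(1/pp)))
      = Ln ^ (B - 1/pp) * X ^ (-γ) / n' := by
  have hsplitn : n'⁻¹ = (n' ^ (1/qq))⁻¹ * (n' ^ (1/pp))⁻¹ := by
    rw [← mul_inv, ← Real.rpow_add hn, hpq, Real.rpow_one]
  have hsplitL : Ln ^ (B - 1/pp) = Ln ^ B * (Ln ^ (1/pp))⁻¹ := by
    rw [← Real.rpow_neg hLn.le, ← Real.rpow_add hLn, sub_eq_add_neg]
  rw [hsplitL, Real.rpow_neg hX.le, Real.rpow_neg hLn.le (1/pp), Real.rpow_neg hn.le (1/pp),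
    div_eq_mul_inv (Ln ^ B * (Ln ^ (1/pp))⁻¹ * (X ^ γ)⁻¹) n',
    div_eq_mul_inv (Ln ^ B) (n' ^ (1/qq) * X ^ γ), hsplitn, mul_inv]
  ring

lemma row_estimate (c1 A α Y Ep l2 Lm mp' pp : ℝ) (hLm : 0 < Lm) (hm : 0 < mp')
    (hc1 : 0 ≤ c1) (hl2 : 0 < l2) (hl2L : l2 ≤ Lm) (hEp : Ep ≤ 0)
    (hE : Ep = A + 1/pp + α*Y) :
    (Lm ^ A / mp' ^ (1/pp)) * (c1 * (Lm ^ α) ^ Y) ≤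
      (c1 * l2 ^ Ep) * (Lm ^ (-(1/pp)) * mp' ^ (-(1/pp))) := by
  have hmerge : Lm ^ A * Lm ^ (α*Y) = Lm ^ Ep * Lm ^ (-(1/pp)) := by
    rw [← Real.rpow_add hLm, ← Real.rpow_add hLm, hE]
    congr 1; ring
  have hmono : Lm ^ Ep ≤ l2 ^ Ep := Real.rpow_le_rpow_of_nonpos hl2 hl2L hEp
  have hrw : (Lm ^ A / mp' ^ (1/pp)) * (c1 * (Lm ^ α) ^ Y)
      = c1 * Lm ^ Ep * (Lm ^ (-(1/pp)) * mp' ^ (-(1/pp))) := by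
    rw [← Real.rpow_mul hLm.le, div_eq_mul_inv (Lm ^ A) (mp' ^ (1/pp)),
      ← Real.rpow_neg hm.le]
    linear_combination (c1 * mp' ^ (-(1/pp))) * hmerge
  rw [hrw]
  have hZ : (0:ℝ) ≤ Lm ^ (-(1/pp)) * mp' ^ (-(1/pp)) := by positivity
  have h2 := mul_le_mul_of_nonneg_left hmono hc1
  nlinarith [mul_le_mul_of_nonneg_right h2 hZ]

lemma wt_rpow (p q r s : ℝ) (j : ℕ) (hexp : -(1/(p*q)) * r = s) :
    (ENNReal.ofReal (wt p q j)) ^ r =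
      ENNReal.ofReal (Real.log ((j:ℝ)+2) ^ s * ((j:ℝ)+2) ^ s) := by
  have hLj : (0:ℝ) < Real.log ((j:ℝ)+2) := log_add2_pos j
  have hj : (0:ℝ) < (j:ℝ)+2 := by positivity
  rw [ENNReal.ofReal_rpow_of_pos (wt_pos p q j)]
  congr 1
  rw [wt, Real.mul_rpow (Real.rpow_nonneg hLj.le _) (Real.rpow_nonneg hj.le _),
    ← Real.rpow_mul hLj.le, ← Real.rpow_mul hj.le, hexp]

set_option maxHeartbeats 1000000 in
lemma cond1 (p q α β γ μ ν : ℝ) (hp : 1 < p) (hq : 1 / p + 1 / q = 1)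
    (hγ : 0 < γ) (hα0 : 0 < α) (hα1 : α ≤ 1) (hβ0 : 0 < β) (hβ1 : β ≤ 1)
    (hμ1 : -1 < μ) (hμ2 : μ < p - 1) (hν1 : -1 < ν) (hν2 : ν < p - 1)
    (hcond : 0 ≤ p * (γ - 1) - (μ - ν)) :
    ∃ C : ℝ, 0 < C ∧ ∀ m, ∑' n : ℕ, ENNReal.ofReal (kern p q α β γ μ ν m n) *
        (ENNReal.ofReal (wt p q n)) ^ q ≤
      ENNReal.ofReal C * (ENNReal.ofReal (wt p q m)) ^ q := by
  have hp0 : (0:ℝ) < p := by linarith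
  have h1p : 1/p < 1 := by rw [div_lt_one hp0]; exact hp
  have h1q : 0 < 1/q := by linarith
  have hq0 : (0:ℝ) < q := by
    rcases lt_trichotomy q 0 with h | h | h
    · exact absurd (div_neg_of_pos_of_neg one_pos h) (by linarith)
    · exact absurd h1q (by rw [h]; simp)
    · exact h
  have hprod : p + q = p * q := by
    have hq' := hq
    field_simp at hq'
    linarith
  have hpm1 : (p-1)*(q-1) = 1 := by linear_combination -hprod
  have hqm1 : 0 < q - 1 := by
    by_contra h
    push_neg at h
    nlinarith
  have hnu' : (q-1)*ν < 1 := by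
    nlinarith [mul_pos hqm1 (show (0:ℝ) < p-1-ν by linarith)]
  have key1 : (1-(q-1)*ν)*p = (p-1-ν)*q := by linear_combination (1+ν) * hprod
  have h1q' : 1/q = 1 - 1/p := by linarith
  have he1eq : ((((β - 1) - (q - 1) * β * ν) / q) - 1/p) + 1 = β*(1-(q-1)*ν)/q := by
    rw [show ((((β - 1) - (q - 1) * β * ν) / q) - 1/p) + 1 = (((β - 1) - (q - 1) * β * ν) / q) + 1/q by rw [h1q']; ring, ← add_div]
    congr 1; ring
  have he1pos : 0 < ((((β - 1) - (q - 1) * β * ν) / q) - 1/p) + 1 := by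
    rw [he1eq]
    exact div_pos (mul_pos hβ0 (by linarith)) hq0
  have he1le : ((((β - 1) - (q - 1) * β * ν) / q) - 1/p) ≤ 0 := by
    have h2 : ((((β - 1) - (q - 1) * β * ν) / q) - 1/p) + 1 ≤ 1 := by
      rw [he1eq, div_le_one hq0]
      nlinarith [mul_nonneg (by linarith : (0:ℝ) ≤ 1-β) (by linarith : (0:ℝ) ≤ 1-(q-1)*ν),
        mul_pos hqm1 (by linarith : (0:ℝ) < 1+ν)]
    linarith
  have hgp : p - 1 - ν < γ * p := by nlinarith [hcond, hμ1]
  have hconv1 : ((((β - 1) - (q - 1) * β * ν) / q) - 1/p) + 1 < β*γ := by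
    rw [he1eq, div_lt_iff₀ hq0]
    have h : 1-(q-1)*ν < γ*q := by
      nlinarith [key1, mul_pos hq0 (show (0:ℝ) < γ*p - (p-1-ν) by linarith), hp0]
    nlinarith [mul_pos hβ0 (sub_pos.2 h)]
  have hYq : (((((β - 1) - (q - 1) * β * ν) / q) - 1/p) + 1)/β = (p-1-ν)/p := by
    rw [he1eq, show β*(1-(q-1)*ν)/q/β = (1-(q-1)*ν)/q by field_simp,
      div_eq_div_iff hq0.ne' hp0.ne']
    linear_combination key1
  have hE1 : ((((α - 1) + α * μ) / p) + 1/p + α*((((((β - 1) - (q - 1) * β * ν) / q) - 1/p) + 1)/β - γ)) ≤ 0 := by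
    rw [show ((((α - 1) + α * μ) / p) + 1/p + α*((((((β - 1) - (q - 1) * β * ν) / q) - 1/p) + 1)/β - γ)) = (((α - 1) + α * μ) / p) + 1/p + α*((((((β - 1) - (q - 1) * β * ν) / q) - 1/p) + 1)/β - γ) by ring, hYq,
      show (((α - 1) + α * μ) / p) + 1/p + α*((p-1-ν)/p - γ) = (α*(p + μ - ν - γ*p))/p by field_simp; ring]
    exact div_nonpos_iff.mpr (Or.inr ⟨by nlinarith [mul_nonneg hα0.le hcond], hp0.le⟩)
  have hl2 : (0:ℝ) < Real.log 2 := Real.log_pos (by norm_num)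
  have hc1pos : (0:ℝ) < (1/(((((β - 1) - (q - 1) * β * ν) / q) - 1/p) + 1) + 1/(β*γ - (((((β - 1) - (q - 1) * β * ν) / q) - 1/p) + 1))) :=
    add_pos (div_pos one_pos he1pos) (div_pos one_pos (by linarith [hconv1]))
  refine ⟨(1/(((((β - 1) - (q - 1) * β * ν) / q) - 1/p) + 1) + 1/(β*γ - (((((β - 1) - (q - 1) * β * ν) / q) - 1/p) + 1))) * Real.log 2 ^ ((((α - 1) + α * μ) / p) + 1/p + α*((((((β - 1) - (q - 1) * β * ν) / q) - 1/p) + 1)/β - γ)),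
    mul_pos hc1pos (Real.rpow_pos_of_pos hl2 _), fun m => ?_⟩
  have hLm0 : (0:ℝ) < Real.log ((m:ℝ)+2) := log_add2_pos m
  have hm' : (0:ℝ) < (m:ℝ)+2 := by positivity
  have hexpq : -(1/(p*q)) * q = -(1/p) := by field_simp
  have hMa : (0:ℝ) < Real.log ((m:ℝ)+2) ^ α := Real.rpow_pos_of_pos hLm0 α
  have hfac : (0:ℝ) ≤ Real.log ((m:ℝ)+2) ^ (((α - 1) + α * μ) / p) / ((m:ℝ)+2) ^ (1/p) :=
    div_nonneg (Real.rpow_nonneg hLm0.le _) (Real.rpow_nonneg hm'.le _)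
  have hterm : ∀ n : ℕ, ENNReal.ofReal (kern p q α β γ μ ν m n) *
      (ENNReal.ofReal (wt p q n)) ^ q =
      ENNReal.ofReal ((Real.log ((m:ℝ)+2) ^ (((α - 1) + α * μ) / p) / ((m:ℝ)+2) ^ (1/p)) *
        (Real.log ((n:ℝ)+2) ^ ((((β - 1) - (q - 1) * β * ν) / q) - 1/p) *
          (Real.log ((m:ℝ)+2) ^ α + Real.log ((n:ℝ)+2) ^ β) ^ (-γ) / ((n:ℝ)+2))) := by
    intro n
    have hLn0 : (0:ℝ) < Real.log ((n:ℝ)+2) := log_add2_pos n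
    have hn' : (0:ℝ) < (n:ℝ)+2 := by positivity
    have hX0 : (0:ℝ) < Real.log ((m:ℝ)+2) ^ α + Real.log ((n:ℝ)+2) ^ β := by
      have := Real.rpow_pos_of_pos hLn0 β
      positivity
    rw [wt_rpow p q q (-(1/p)) n hexpq, ← ENNReal.ofReal_mul (kern_nonneg p q α β γ μ ν m n)]
    congr 1
    calc kern p q α β γ μ ν m n *
          (Real.log ((n:ℝ)+2) ^ (-(1/p)) * ((n:ℝ)+2) ^ (-(1/p)))
        = (Real.log ((m:ℝ)+2) ^ (((α - 1) + α * μ) / p) / ((m:ℝ)+2) ^ (1/p)) *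
          ((Real.log ((n:ℝ)+2) ^ (((β - 1) - (q - 1) * β * ν) / q) / (((n:ℝ)+2) ^ (1/q) *
            (Real.log ((m:ℝ)+2) ^ α + Real.log ((n:ℝ)+2) ^ β) ^ γ)) *
           (Real.log ((n:ℝ)+2) ^ (-(1/p)) * ((n:ℝ)+2) ^ (-(1/p)))) := by
          rw [kern]; ring
      _ = (Real.log ((m:ℝ)+2) ^ (((α - 1) + α * μ) / p) / ((m:ℝ)+2) ^ (1/p)) *
          (Real.log ((n:ℝ)+2) ^ ((((β - 1) - (q - 1) * β * ν) / q) - 1/p) *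
            (Real.log ((m:ℝ)+2) ^ α + Real.log ((n:ℝ)+2) ^ β) ^ (-γ) / ((n:ℝ)+2)) := by
          rw [inner_identity _ _ _ _ p q γ hLn0 hn' hX0 (by linarith)]
  calc ∑' n : ℕ, ENNReal.ofReal (kern p q α β γ μ ν m n) * (ENNReal.ofReal (wt p q n)) ^ q
      = ENNReal.ofReal (Real.log ((m:ℝ)+2) ^ (((α - 1) + α * μ) / p) / ((m:ℝ)+2) ^ (1/p)) *
          ∑' n : ℕ, ENNReal.ofReal (Real.log ((n:ℝ)+2) ^ ((((β - 1) - (q - 1) * β * ν) / q) - 1/p) *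
            (Real.log ((m:ℝ)+2) ^ α + Real.log ((n:ℝ)+2) ^ β) ^ (-γ) / ((n:ℝ)+2)) := by
        rw [← ENNReal.tsum_mul_left]
        exact tsum_congr fun n => by rw [hterm n, ENNReal.ofReal_mul hfac]
    _ ≤ ENNReal.ofReal (Real.log ((m:ℝ)+2) ^ (((α - 1) + α * μ) / p) / ((m:ℝ)+2) ^ (1/p)) *
          ENNReal.ofReal ((1/(((((β - 1) - (q - 1) * β * ν) / q) - 1/p) + 1) + 1/(β*γ - (((((β - 1) - (q - 1) * β * ν) / q) - 1/p) + 1))) * (Real.log ((m:ℝ)+2) ^ α) ^ ((((((β - 1) - (q - 1) * β * ν) / q) - 1/p) + 1)/β - γ)) :=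
        mul_le_mul_right (side_sum ((((β - 1) - (q - 1) * β * ν) / q) - 1/p) β γ (Real.log ((m:ℝ)+2) ^ α)
          (by linarith) he1le hβ0 hγ hMa hconv1) _
    _ = ENNReal.ofReal ((Real.log ((m:ℝ)+2) ^ (((α - 1) + α * μ) / p) / ((m:ℝ)+2) ^ (1/p)) *
          ((1/(((((β - 1) - (q - 1) * β * ν) / q) - 1/p) + 1) + 1/(β*γ - (((((β - 1) - (q - 1) * β * ν) / q) - 1/p) + 1))) * (Real.log ((m:ℝ)+2) ^ α) ^ ((((((β - 1) - (q - 1) * β * ν) / q) - 1/p) + 1)/β - γ))) := (ENNReal.ofReal_mul hfac).symm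
    _ ≤ ENNReal.ofReal (((1/(((((β - 1) - (q - 1) * β * ν) / q) - 1/p) + 1) + 1/(β*γ - (((((β - 1) - (q - 1) * β * ν) / q) - 1/p) + 1))) * Real.log 2 ^ ((((α - 1) + α * μ) / p) + 1/p + α*((((((β - 1) - (q - 1) * β * ν) / q) - 1/p) + 1)/β - γ))) *
          (Real.log ((m:ℝ)+2) ^ (-(1/p)) * ((m:ℝ)+2) ^ (-(1/p)))) :=
        ENNReal.ofReal_le_ofReal (row_estimate (1/(((((β - 1) - (q - 1) * β * ν) / q) - 1/p) + 1) + 1/(β*γ - (((((β - 1) - (q - 1) * β * ν) / q) - 1/p) + 1))) (((α - 1) + α * μ) / p) α ((((((β - 1) - (q - 1) * β * ν) / q) - 1/p) + 1)/β - γ) ((((α - 1) + α * μ) / p) + 1/p + α*((((((β - 1) - (q - 1) * β * ν) / q) - 1/p) + 1)/β - γ)) (Real.log 2)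
          (Real.log ((m:ℝ)+2)) ((m:ℝ)+2) p hLm0 hm' hc1pos.le hl2 (log2_le_log_add2 m) hE1 rfl)
    _ = ENNReal.ofReal ((1/(((((β - 1) - (q - 1) * β * ν) / q) - 1/p) + 1) + 1/(β*γ - (((((β - 1) - (q - 1) * β * ν) / q) - 1/p) + 1))) * Real.log 2 ^ ((((α - 1) + α * μ) / p) + 1/p + α*((((((β - 1) - (q - 1) * β * ν) / q) - 1/p) + 1)/β - γ))) * (ENNReal.ofReal (wt p q m)) ^ q := by
        rw [wt_rpow p q q (-(1/p)) m hexpq,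
          ← ENNReal.ofReal_mul (mul_pos hc1pos (Real.rpow_pos_of_pos hl2 _)).le]

set_option maxHeartbeats 1000000 in
lemma cond2 (p q α β γ μ ν : ℝ) (hp : 1 < p) (hq : 1 / p + 1 / q = 1)
    (hγ : 0 < γ) (hα0 : 0 < α) (hα1 : α ≤ 1) (hβ0 : 0 < β) (hβ1 : β ≤ 1)
    (hμ1 : -1 < μ) (hμ2 : μ < p - 1) (hν1 : -1 < ν) (hν2 : ν < p - 1)
    (hcond : 0 ≤ p * (γ - 1) - (μ - ν)) :
    ∃ C : ℝ, 0 < C ∧ ∀ n, ∑' m : ℕ, ENNReal.ofReal (kern p q α β γ μ ν m n) *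
        (ENNReal.ofReal (wt p q m)) ^ p ≤
      ENNReal.ofReal C * (ENNReal.ofReal (wt p q n)) ^ p := by
  have hp0 : (0:ℝ) < p := by linarith
  have h1p : 1/p < 1 := by rw [div_lt_one hp0]; exact hp
  have h1q : 0 < 1/q := by linarith
  have hq0 : (0:ℝ) < q := by
    rcases lt_trichotomy q 0 with h | h | h
    · exact absurd (div_neg_of_pos_of_neg one_pos h) (by linarith)
    · exact absurd h1q (by rw [h]; simp)
    · exact h
  have hprod : p + q = p * q := by
    have hq' := hq
    field_simp at hq'
    linarith
  have hpm1 : (p-1)*(q-1) = 1 := by linear_combination -hprod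
  have hqm1 : 0 < q - 1 := by
    by_contra h
    push_neg at h
    nlinarith
  have key1 : (1-(q-1)*ν)*p = (p-1-ν)*q := by linear_combination (1+ν) * hprod
  have h1q' : 1/q = 1 - 1/p := by linarith
  have h1p' : 1/p = 1 - 1/q := by linarith
  have he2eq : ((((α - 1) + α * μ) / p) - 1/q) + 1 = α*(1+μ)/p := by
    rw [show ((((α - 1) + α * μ) / p) - 1/q) + 1 = (((α - 1) + α * μ) / p) + 1/p by rw [h1p']; ring, ← add_div]
    congr 1; ring
  have he2pos : 0 < ((((α - 1) + α * μ) / p) - 1/q) + 1 := by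
    rw [he2eq]
    exact div_pos (mul_pos hα0 (by linarith)) hp0
  have he2le : ((((α - 1) + α * μ) / p) - 1/q) ≤ 0 := by
    have h2 : ((((α - 1) + α * μ) / p) - 1/q) + 1 ≤ 1 := by
      rw [he2eq, div_le_one hp0]
      nlinarith [mul_nonneg (by linarith : (0:ℝ) ≤ 1-α) (by linarith : (0:ℝ) ≤ 1+μ)]
    linarith
  have hconv2 : ((((α - 1) + α * μ) / p) - 1/q) + 1 < α*γ := by
    rw [he2eq, div_lt_iff₀ hp0]
    have h : 1+μ < γ*p := by nlinarith [hcond]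
    nlinarith [mul_pos hα0 (sub_pos.2 h)]
  have hBq : (((β - 1) - (q - 1) * β * ν) / q) + 1/q = β*(1-(q-1)*ν)/q := by
    rw [← add_div]
    congr 1; ring
  have hY2 : (((((α - 1) + α * μ) / p) - 1/q) + 1)/α = (1+μ)/p := by
    rw [he2eq, show α*(1+μ)/p/α = α*((1+μ)/p)/α by ring, mul_div_cancel_left₀ _ hα0.ne']
  have hE2 : ((((β - 1) - (q - 1) * β * ν) / q) + 1/q + β*((((((α - 1) + α * μ) / p) - 1/q) + 1)/α - γ)) ≤ 0 := by
    rw [show ((((β - 1) - (q - 1) * β * ν) / q) + 1/q + β*((((((α - 1) + α * μ) / p) - 1/q) + 1)/α - γ)) = ((((β - 1) - (q - 1) * β * ν) / q) + 1/q) + β*((((((α - 1) + α * μ) / p) - 1/q) + 1)/α - γ) by ring, hY2, hBq,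
      show β*(1-(q-1)*ν)/q = β*(p-1-ν)/p by
        rw [div_eq_div_iff hq0.ne' hp0.ne']; linear_combination β * key1,
      show β*(p-1-ν)/p + β*((1+μ)/p - γ) = (β*(p + μ - ν - γ*p))/p by field_simp; ring]
    exact div_nonpos_iff.mpr (Or.inr ⟨by nlinarith [mul_nonneg hβ0.le hcond], hp0.le⟩)
  have hl2 : (0:ℝ) < Real.log 2 := Real.log_pos (by norm_num)
  have hc2pos : (0:ℝ) < (1/(((((α - 1) + α * μ) / p) - 1/q) + 1) + 1/(α*γ - (((((α - 1) + α * μ) / p) - 1/q) + 1))) :=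
    add_pos (div_pos one_pos he2pos) (div_pos one_pos (by linarith [hconv2]))
  refine ⟨(1/(((((α - 1) + α * μ) / p) - 1/q) + 1) + 1/(α*γ - (((((α - 1) + α * μ) / p) - 1/q) + 1))) * Real.log 2 ^ ((((β - 1) - (q - 1) * β * ν) / q) + 1/q + β*((((((α - 1) + α * μ) / p) - 1/q) + 1)/α - γ)),
    mul_pos hc2pos (Real.rpow_pos_of_pos hl2 _), fun n => ?_⟩
  have hLn0 : (0:ℝ) < Real.log ((n:ℝ)+2) := log_add2_pos n
  have hn' : (0:ℝ) < (n:ℝ)+2 := by positivity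
  have hexpp : -(1/(p*q)) * p = -(1/q) := by field_simp
  have hMb : (0:ℝ) < Real.log ((n:ℝ)+2) ^ β := Real.rpow_pos_of_pos hLn0 β
  have hfac : (0:ℝ) ≤ Real.log ((n:ℝ)+2) ^ (((β - 1) - (q - 1) * β * ν) / q) / ((n:ℝ)+2) ^ (1/q) :=
    div_nonneg (Real.rpow_nonneg hLn0.le _) (Real.rpow_nonneg hn'.le _)
  have hterm : ∀ m : ℕ, ENNReal.ofReal (kern p q α β γ μ ν m n) *
      (ENNReal.ofReal (wt p q m)) ^ p =
      ENNReal.ofReal ((Real.log ((n:ℝ)+2) ^ (((β - 1) - (q - 1) * β * ν) / q) / ((n:ℝ)+2) ^ (1/q)) *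
        (Real.log ((m:ℝ)+2) ^ ((((α - 1) + α * μ) / p) - 1/q) *
          (Real.log ((n:ℝ)+2) ^ β + Real.log ((m:ℝ)+2) ^ α) ^ (-γ) / ((m:ℝ)+2))) := by
    intro m
    have hLm0 : (0:ℝ) < Real.log ((m:ℝ)+2) := log_add2_pos m
    have hm' : (0:ℝ) < (m:ℝ)+2 := by positivity
    have hX0 : (0:ℝ) < Real.log ((m:ℝ)+2) ^ α + Real.log ((n:ℝ)+2) ^ β := by
      have := Real.rpow_pos_of_pos hLm0 α
      have := Real.rpow_pos_of_pos hLn0 β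
      positivity
    rw [wt_rpow p q p (-(1/q)) m hexpp, ← ENNReal.ofReal_mul (kern_nonneg p q α β γ μ ν m n)]
    congr 1
    calc kern p q α β γ μ ν m n *
          (Real.log ((m:ℝ)+2) ^ (-(1/q)) * ((m:ℝ)+2) ^ (-(1/q)))
        = (Real.log ((n:ℝ)+2) ^ (((β - 1) - (q - 1) * β * ν) / q) / ((n:ℝ)+2) ^ (1/q)) *
          ((Real.log ((m:ℝ)+2) ^ (((α - 1) + α * μ) / p) / (((m:ℝ)+2) ^ (1/p) *
            (Real.log ((m:ℝ)+2) ^ α + Real.log ((n:ℝ)+2) ^ β) ^ γ)) *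
           (Real.log ((m:ℝ)+2) ^ (-(1/q)) * ((m:ℝ)+2) ^ (-(1/q)))) := by
          rw [kern]; ring
      _ = (Real.log ((n:ℝ)+2) ^ (((β - 1) - (q - 1) * β * ν) / q) / ((n:ℝ)+2) ^ (1/q)) *
          (Real.log ((m:ℝ)+2) ^ ((((α - 1) + α * μ) / p) - 1/q) *
            (Real.log ((n:ℝ)+2) ^ β + Real.log ((m:ℝ)+2) ^ α) ^ (-γ) / ((m:ℝ)+2)) := by
          rw [inner_identity _ _ _ _ q p γ hLm0 hm' hX0 (by linarith),
            add_comm (Real.log ((m:ℝ)+2) ^ α) (Real.log ((n:ℝ)+2) ^ β)]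
  calc ∑' m : ℕ, ENNReal.ofReal (kern p q α β γ μ ν m n) * (ENNReal.ofReal (wt p q m)) ^ p
      = ENNReal.ofReal (Real.log ((n:ℝ)+2) ^ (((β - 1) - (q - 1) * β * ν) / q) / ((n:ℝ)+2) ^ (1/q)) *
          ∑' m : ℕ, ENNReal.ofReal (Real.log ((m:ℝ)+2) ^ ((((α - 1) + α * μ) / p) - 1/q) *
            (Real.log ((n:ℝ)+2) ^ β + Real.log ((m:ℝ)+2) ^ α) ^ (-γ) / ((m:ℝ)+2)) := by
        rw [← ENNReal.tsum_mul_left]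
        exact tsum_congr fun m => by rw [hterm m, ENNReal.ofReal_mul hfac]
    _ ≤ ENNReal.ofReal (Real.log ((n:ℝ)+2) ^ (((β - 1) - (q - 1) * β * ν) / q) / ((n:ℝ)+2) ^ (1/q)) *
          ENNReal.ofReal ((1/(((((α - 1) + α * μ) / p) - 1/q) + 1) + 1/(α*γ - (((((α - 1) + α * μ) / p) - 1/q) + 1))) * (Real.log ((n:ℝ)+2) ^ β) ^ ((((((α - 1) + α * μ) / p) - 1/q) + 1)/α - γ)) :=
        mul_le_mul_right (side_sum ((((α - 1) + α * μ) / p) - 1/q) α γ (Real.log ((n:ℝ)+2) ^ β)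
          (by linarith) he2le hα0 hγ hMb hconv2) _
    _ = ENNReal.ofReal ((Real.log ((n:ℝ)+2) ^ (((β - 1) - (q - 1) * β * ν) / q) / ((n:ℝ)+2) ^ (1/q)) *
          ((1/(((((α - 1) + α * μ) / p) - 1/q) + 1) + 1/(α*γ - (((((α - 1) + α * μ) / p) - 1/q) + 1))) * (Real.log ((n:ℝ)+2) ^ β) ^ ((((((α - 1) + α * μ) / p) - 1/q) + 1)/α - γ))) := (ENNReal.ofReal_mul hfac).symm
    _ ≤ ENNReal.ofReal (((1/(((((α - 1) + α * μ) / p) - 1/q) + 1) + 1/(α*γ - (((((α - 1) + α * μ) / p) - 1/q) + 1))) * Real.log 2 ^ ((((β - 1) - (q - 1) * β * ν) / q) + 1/q + β*((((((α - 1) + α * μ) / p) - 1/q) + 1)/α - γ))) *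
          (Real.log ((n:ℝ)+2) ^ (-(1/q)) * ((n:ℝ)+2) ^ (-(1/q)))) :=
        ENNReal.ofReal_le_ofReal (row_estimate (1/(((((α - 1) + α * μ) / p) - 1/q) + 1) + 1/(α*γ - (((((α - 1) + α * μ) / p) - 1/q) + 1))) (((β - 1) - (q - 1) * β * ν) / q) β ((((((α - 1) + α * μ) / p) - 1/q) + 1)/α - γ) ((((β - 1) - (q - 1) * β * ν) / q) + 1/q + β*((((((α - 1) + α * μ) / p) - 1/q) + 1)/α - γ)) (Real.log 2)
          (Real.log ((n:ℝ)+2)) ((n:ℝ)+2) q hLn0 hn' hc2pos.le hl2 (log2_le_log_add2 n) hE2 rfl)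
    _ = ENNReal.ofReal ((1/(((((α - 1) + α * μ) / p) - 1/q) + 1) + 1/(α*γ - (((((α - 1) + α * μ) / p) - 1/q) + 1))) * Real.log 2 ^ ((((β - 1) - (q - 1) * β * ν) / q) + 1/q + β*((((((α - 1) + α * μ) / p) - 1/q) + 1)/α - γ))) * (ENNReal.ofReal (wt p q n)) ^ p := by
        rw [wt_rpow p q p (-(1/q)) n hexpp,
          ← ENNReal.ofReal_mul (mul_pos hc2pos (Real.rpow_pos_of_pos hl2 _)).le]


lemma tsum_holder (p q : ℝ) (hpq : p.HolderConjugate q) (F G : ℕ → ℝ≥0∞) :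
    ∑' n, F n * G n ≤ (∑' n, F n ^ p) ^ (1/p) * (∑' n, G n ^ q) ^ (1/q) := by
  have h := ENNReal.lintegral_mul_le_Lp_mul_Lq (Measure.count : Measure ℕ) hpq
    (measurable_of_countable F).aemeasurable (measurable_of_countable G).aemeasurable
  simpa [MeasureTheory.lintegral_count] using h

lemma schur_test (p q : ℝ) (hpq : p.HolderConjugate q)
    (K : ℕ → ℕ → ℝ≥0∞) (h : ℕ → ℝ≥0∞) (hh0 : ∀ n, h n ≠ 0) (hht : ∀ n, h n ≠ ⊤)
    (C1 C2 : ℝ≥0∞)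
    (hc1 : ∀ m, ∑' n, K m n * h n ^ q ≤ C1 * h m ^ q)
    (hc2 : ∀ n, ∑' m, K m n * h m ^ p ≤ C2 * h n ^ p)
    (f : ℕ → ℝ≥0∞) :
    ∑' m, (∑' n, K m n * f n) ^ p ≤ C1 ^ (p - 1) * C2 * ∑' n, f n ^ p := by
  have hp0 : (0:ℝ) < p := hpq.pos
  have hq0 : (0:ℝ) < q := hpq.symm.pos
  -- pointwise bound on rows
  have row : ∀ m, (∑' n, K m n * f n) ^ p ≤
      C1 ^ (p/q) * h m ^ p * ∑' n, K m n * (h n)⁻¹ ^ p * f n ^ p := by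
    intro m
    have hsplit : ∀ n, K m n * f n =
        (K m n ^ (1/q) * h n) * (K m n ^ (1/p) * ((h n)⁻¹ * f n)) := by
      intro n
      have : K m n ^ (1/q) * K m n ^ (1/p) = K m n := by
        rw [← ENNReal.rpow_add_of_nonneg _ _ (by positivity) (by positivity),
          show (1/q + 1/p : ℝ) = 1 by
            rw [add_comm, one_div, one_div]; exact hpq.inv_add_inv_eq_one,
          ENNReal.rpow_one]
      calc K m n * f n = (K m n ^ (1/q) * K m n ^ (1/p)) * ((h n * (h n)⁻¹) * f n) := by
            rw [this, ENNReal.mul_inv_cancel (hh0 n) (hht n), one_mul]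
        _ = (K m n ^ (1/q) * h n) * (K m n ^ (1/p) * ((h n)⁻¹ * f n)) := by ring
    have hH := tsum_holder q p hpq.symm
      (fun n => K m n ^ (1/q) * h n) (fun n => K m n ^ (1/p) * ((h n)⁻¹ * f n))
    have e1 : (∑' n, (K m n ^ (1/q) * h n) ^ q) = ∑' n, K m n * h n ^ q := by
      congr 1; funext n
      rw [ENNReal.mul_rpow_of_nonneg _ _ hq0.le, ← ENNReal.rpow_mul,
        one_div_mul_cancel hq0.ne', ENNReal.rpow_one]
    have e2 : (∑' n, (K m n ^ (1/p) * ((h n)⁻¹ * f n)) ^ p)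
        = ∑' n, K m n * (h n)⁻¹ ^ p * f n ^ p := by
      congr 1; funext n
      rw [ENNReal.mul_rpow_of_nonneg _ _ hp0.le, ← ENNReal.rpow_mul,
        one_div_mul_cancel hp0.ne', ENNReal.rpow_one,
        ENNReal.mul_rpow_of_nonneg _ _ hp0.le, mul_assoc]
    have hsum : (∑' n, K m n * f n) = ∑' n,
        (K m n ^ (1/q) * h n) * (K m n ^ (1/p) * ((h n)⁻¹ * f n)) := tsum_congr hsplit
    have step1 : (∑' n, (K m n ^ (1/q) * h n) ^ q) ^ ((1/q) * p) ≤ C1 ^ (p/q) * h m ^ p := by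
      rw [e1]
      calc (∑' n, K m n * h n ^ q) ^ ((1/q) * p)
          ≤ (C1 * h m ^ q) ^ ((1/q) * p) := ENNReal.rpow_le_rpow (hc1 m) (by positivity)
        _ = C1 ^ (p/q) * h m ^ p := by
            rw [ENNReal.mul_rpow_of_nonneg _ _ (by positivity), ← ENNReal.rpow_mul]
            congr 2
            · rw [one_div, div_eq_mul_inv, mul_comm]
            · rw [show q * (1/q * p) = p by field_simp]
    calc (∑' n, K m n * f n) ^ p
        ≤ ((∑' n, (K m n ^ (1/q) * h n) ^ q) ^ (1/q)
            * (∑' n, (K m n ^ (1/p) * ((h n)⁻¹ * f n)) ^ p) ^ (1/p)) ^ p := by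
          rw [hsum]; exact ENNReal.rpow_le_rpow hH hp0.le
      _ = (∑' n, (K m n ^ (1/q) * h n) ^ q) ^ ((1/q) * p)
            * (∑' n, (K m n ^ (1/p) * ((h n)⁻¹ * f n)) ^ p) := by
          rw [ENNReal.mul_rpow_of_nonneg _ _ hp0.le, ← ENNReal.rpow_mul, ← ENNReal.rpow_mul,
            one_div_mul_cancel hp0.ne', ENNReal.rpow_one]
      _ ≤ C1 ^ (p/q) * h m ^ p * ∑' n, K m n * (h n)⁻¹ ^ p * f n ^ p := by
          rw [e2]; exact mul_le_mul_left step1 _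
  -- sum over m
  have key : ∑' m, (∑' n, K m n * f n) ^ p ≤
      C1 ^ (p/q) * ∑' m, h m ^ p * ∑' n, K m n * (h n)⁻¹ ^ p * f n ^ p := by
    rw [← ENNReal.tsum_mul_left]
    exact ENNReal.tsum_le_tsum fun m => by
      simpa [mul_assoc] using row m
  have swap : (∑' m, h m ^ p * ∑' n, K m n * (h n)⁻¹ ^ p * f n ^ p)
      ≤ C2 * ∑' n, f n ^ p := by
    calc (∑' m, h m ^ p * ∑' n, K m n * (h n)⁻¹ ^ p * f n ^ p)
        = ∑' m, ∑' n, h m ^ p * (K m n * (h n)⁻¹ ^ p * f n ^ p) := by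
          congr 1; funext m; rw [ENNReal.tsum_mul_left]
      _ = ∑' n, ∑' m, h m ^ p * (K m n * (h n)⁻¹ ^ p * f n ^ p) := ENNReal.tsum_comm
      _ = ∑' n, ((h n)⁻¹ ^ p * f n ^ p) * ∑' m, K m n * h m ^ p := by
          congr 1; funext n
          rw [← ENNReal.tsum_mul_left]
          congr 1; funext m; ring
      _ ≤ ∑' n, ((h n)⁻¹ ^ p * f n ^ p) * (C2 * h n ^ p) :=
          ENNReal.tsum_le_tsum fun n => mul_le_mul_right (hc2 n) _
      _ = ∑' n, C2 * (((h n)⁻¹ * h n) ^ p * f n ^ p) := by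
          congr 1; funext n
          rw [ENNReal.mul_rpow_of_nonneg _ _ hp0.le]; ring
      _ = C2 * ∑' n, f n ^ p := by
          rw [← ENNReal.tsum_mul_left]
          congr 1; funext n
          rw [ENNReal.inv_mul_cancel (hh0 n) (hht n), ENNReal.one_rpow, one_mul]
  have hpq' : p / q = p - 1 := by
    have h1 : p⁻¹ + q⁻¹ = 1 := hpq.inv_add_inv_eq_one
    have : q⁻¹ = 1 - p⁻¹ := by linarith
    rw [div_eq_mul_inv, this, mul_sub, mul_one, mul_inv_cancel₀ hp0.ne']
  calc ∑' m, (∑' n, K m n * f n) ^ p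
      ≤ C1 ^ (p/q) * ∑' m, h m ^ p * ∑' n, K m n * (h n)⁻¹ ^ p * f n ^ p := key
    _ ≤ C1 ^ (p/q) * (C2 * ∑' n, f n ^ p) := mul_le_mul_right swap _
    _ = C1 ^ (p - 1) * C2 * ∑' n, f n ^ p := by rw [hpq', mul_assoc]


/-- If `p(γ−1) − (μ−ν) ≥ 0` (equivalently `γ ≥ 1 + (μ−ν)/p`), then the generalized
multiplicative Hilbert operator `H^{μ,ν}_{p,α,β,γ}` is bounded on `l^p`. -/
theorem generalized_multiplicative_hilbert_bounded_of_nonneg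
    (p q α β γ μ ν : ℝ) (hp : 1 < p) (hq : 1 / p + 1 / q = 1)
    (hγ : 0 < γ) (hα0 : 0 < α) (hα1 : α ≤ 1) (hβ0 : 0 < β) (hβ1 : β ≤ 1)
    (hμ1 : -1 < μ) (hμ2 : μ < p - 1) (hν1 : -1 < ν) (hν2 : ν < p - 1)
    (hcond : 0 ≤ p * (γ - 1) - (μ - ν)) :
    ∃ C : ℝ, 0 < C ∧ ∀ a : ℕ → ℂ, lpNorm p a ≠ ⊤ →
      lpNorm p (genH p q α β γ μ ν a) ≤ ENNReal.ofReal C * lpNorm p a := by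
  obtain ⟨C1, hC1pos, hc1⟩ := cond1 p q α β γ μ ν hp hq hγ hα0 hα1 hβ0 hβ1 hμ1 hμ2 hν1 hν2 hcond
  obtain ⟨C2, hC2pos, hc2⟩ := cond2 p q α β γ μ ν hp hq hγ hα0 hα1 hβ0 hβ1 hμ1 hμ2 hν1 hν2 hcond
  have hp0 : (0:ℝ) < p := by linarith
  have hpq : p.HolderConjugate q := Real.holderConjugate_iff.mpr ⟨hp, by rw [← one_div, ← one_div]; exact hq⟩
  set D : ℝ≥0∞ := (ENNReal.ofReal C1 ^ (p-1) * ENNReal.ofReal C2) ^ (1/p) with hD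
  have hDne : D ≠ ⊤ := by
    rw [hD]
    apply ENNReal.rpow_ne_top_of_nonneg (by positivity)
    exact ENNReal.mul_ne_top
      (ENNReal.rpow_ne_top_of_nonneg (by linarith) ENNReal.ofReal_ne_top)
      ENNReal.ofReal_ne_top
  refine ⟨D.toReal + 1, by positivity, fun a _ => ?_⟩
  have hDle : D ≤ ENNReal.ofReal (D.toReal + 1) := by
    conv_lhs => rw [← ENNReal.ofReal_toReal hDne]
    exact ENNReal.ofReal_le_ofReal (by linarith)
  have hschur := schur_test p q hpq
    (fun m n => ENNReal.ofReal (kern p q α β γ μ ν m n))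
    (fun n => ENNReal.ofReal (wt p q n))
    (fun n => (ENNReal.ofReal_pos.2 (wt_pos p q n)).ne')
    (fun n => ENNReal.ofReal_ne_top)
    (ENNReal.ofReal C1) (ENNReal.ofReal C2) hc1 hc2
    (fun n => (‖a (n+2)‖₊ : ℝ≥0∞))
  calc lpNorm p (genH p q α β γ μ ν a)
      ≤ (∑' m : ℕ, (∑' n : ℕ, ENNReal.ofReal (kern p q α β γ μ ν m n) *
          (‖a (n+2)‖₊ : ℝ≥0∞)) ^ p) ^ (1/p) := by
        rw [_root_.lpNorm]
        apply ENNReal.rpow_le_rpow _ (by positivity)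
        exact ENNReal.tsum_le_tsum fun m =>
          ENNReal.rpow_le_rpow (pointwise_bound p q α β γ μ ν a m) hp0.le
    _ ≤ (ENNReal.ofReal C1 ^ (p-1) * ENNReal.ofReal C2 *
          ∑' n : ℕ, (‖a (n+2)‖₊ : ℝ≥0∞) ^ p) ^ (1/p) :=
        ENNReal.rpow_le_rpow hschur (by positivity)
    _ = D * lpNorm p a := by
        rw [ENNReal.mul_rpow_of_nonneg _ _ (by positivity : (0:ℝ) ≤ 1/p), _root_.lpNorm, hD]
    _ ≤ ENNReal.ofReal (D.toReal + 1) * lpNorm p a := mul_le_mul_left hDle _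
end

section
/- Let p > 1, 0 < α ≤ 1, 0 < β ≤ 1, and −1 < μ, ν < p−1. For every integer m ≥ 2, Σ_{n=2}^∞ [ (log n)^{β−1} / ( n · ((log m)^α + (log n)^β)^{1+(μ−ν)/p} ) ] · (log m)^{α(1+μ)/p} / (log n)^{β(1+ν)/p} ≤ (1/β) · B((1+μ)/p, (p−1−ν)/p), where B denotes the Beta function and p' is the conjugate exponent of p. -/
open scoped ENNReal

/-- The Beta function `B(u, v) = ∫_0^∞ t^{u-1} / (1+t)^{u+v} dt`. -/
noncomputable def betaFn (u v : ℝ) : ℝ :=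
  ∫ t in Set.Ioi (0 : ℝ), t ^ (u - 1) / (1 + t) ^ (u + v)

open MeasureTheory Set

theorem lint_image {s : Set ℝ} {f f' : ℝ → ℝ} (hs : MeasurableSet s)
    (hf' : ∀ x ∈ s, HasDerivWithinAt f (f' x) s x) (hf : InjOn f s) (g : ℝ → ℝ≥0∞) :
    ∫⁻ x in f '' s, g x = ∫⁻ x in s, ENNReal.ofReal |f' x| * g (f x) := by
  simpa only [ContinuousLinearMap.det_toSpanSingleton] using
    lintegral_image_eq_lintegral_abs_det_fderiv_mul volume hs
      (fun x hx => (hf' x hx).hasFDerivWithinAt) hf g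

theorem union_Ioc : (⋃ n : ℕ, Ioc ((n:ℝ)+1) ((n:ℝ)+2)) = Ioi 1 := by
  ext x
  simp only [mem_iUnion, mem_Ioc, mem_Ioi]
  constructor
  · rintro ⟨n, h1, _⟩
    have : (0:ℝ) ≤ n := Nat.cast_nonneg n
    linarith
  · intro hx
    have hx0 : (0:ℝ) ≤ x := by linarith
    have hk2 : 2 ≤ ⌈x⌉₊ := by
      have : 1 < ⌈x⌉₊ := by
        rw [Nat.lt_ceil]; exact_mod_cast hx
      omega
    refine ⟨⌈x⌉₊ - 2, ?_, ?_⟩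
    · have h1 : (⌈x⌉₊:ℝ) < x + 1 := Nat.ceil_lt_add_one hx0
      have h2 : ((⌈x⌉₊ - 2 : ℕ):ℝ) = (⌈x⌉₊:ℝ) - 2 := by
        push_cast [Nat.cast_sub hk2]; ring
      linarith
    · have h1 : x ≤ (⌈x⌉₊:ℝ) := Nat.le_ceil x
      have h2 : ((⌈x⌉₊ - 2 : ℕ):ℝ) = (⌈x⌉₊:ℝ) - 2 := by
        push_cast [Nat.cast_sub hk2]; ring
      linarith

theorem exp_image : Real.exp '' Ioi (0:ℝ) = Ioi 1 := by
  ext y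
  simp only [mem_image, mem_Ioi]
  constructor
  · rintro ⟨t, ht, rfl⟩; exact Real.one_lt_exp_iff.mpr ht
  · intro hy
    exact ⟨Real.log y, Real.log_pos hy, Real.exp_log (by linarith)⟩

noncomputable def hfun (β u v L x : ℝ) : ℝ :=
  Real.log x ^ (β-1) / (x * (L + Real.log x ^ β) ^ (u+v)) *
    (L ^ u / Real.log x ^ (β*(1-v)))

theorem hfun_anti {β u v L : ℝ} (hβ1 : β ≤ 1) (hβ0 : 0 < β) (huv : 0 ≤ u + v)
    (hv1 : v ≤ 1) (hL : 0 ≤ L) {x y : ℝ} (hx : 1 < x) (hxy : x ≤ y) :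
    hfun β u v L y ≤ hfun β u v L x := by
  have hy : 1 < y := lt_of_lt_of_le hx hxy
  have lx0 : 0 < Real.log x := Real.log_pos hx
  have ly0 : 0 < Real.log y := Real.log_pos hy
  have lxy : Real.log x ≤ Real.log y := Real.log_le_log (by linarith) hxy
  have hbx : 0 < L + Real.log x ^ β := by positivity
  have hby : 0 < L + Real.log y ^ β := by positivity
  have A1 : Real.log y ^ (β-1) ≤ Real.log x ^ (β-1) :=
    Real.rpow_le_rpow_of_nonpos lx0 lxy (by linarith)
  have A2 : x * (L + Real.log x ^ β) ^ (u+v) ≤ y * (L + Real.log y ^ β) ^ (u+v) := by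
    have h1 : Real.log x ^ β ≤ Real.log y ^ β := Real.rpow_le_rpow lx0.le lxy hβ0.le
    have h2 : (L + Real.log x ^ β) ^ (u+v) ≤ (L + Real.log y ^ β) ^ (u+v) :=
      Real.rpow_le_rpow hbx.le (by linarith) huv
    have h3 : (0:ℝ) ≤ (L + Real.log x ^ β) ^ (u+v) := Real.rpow_nonneg hbx.le _
    nlinarith [Real.rpow_pos_of_pos hbx (u+v)]
  have A2pos : 0 < x * (L + Real.log x ^ β) ^ (u+v) := by
    have := Real.rpow_pos_of_pos hbx (u+v); positivity
  have first : Real.log y ^ (β-1) / (y * (L + Real.log y ^ β) ^ (u+v)) ≤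
      Real.log x ^ (β-1) / (x * (L + Real.log x ^ β) ^ (u+v)) :=
    div_le_div₀ (Real.rpow_nonneg lx0.le _) A1 A2pos A2
  have second : L ^ u / Real.log y ^ (β*(1-v)) ≤ L ^ u / Real.log x ^ (β*(1-v)) := by
    have h1 : Real.log x ^ (β*(1-v)) ≤ Real.log y ^ (β*(1-v)) :=
      Real.rpow_le_rpow lx0.le lxy (by nlinarith)
    have h2 : 0 < Real.log x ^ (β*(1-v)) := Real.rpow_pos_of_pos lx0 _
    exact div_le_div_of_nonneg_left (Real.rpow_nonneg hL _) h2 h1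
  have hsnd : 0 ≤ L ^ u / Real.log y ^ (β*(1-v)) := by positivity
  have hfst : 0 ≤ Real.log x ^ (β-1) / (x * (L + Real.log x ^ β) ^ (u+v)) := by positivity
  exact mul_le_mul first second hsnd hfst

theorem hfun_meas (β u v L : ℝ) : Measurable fun x => ENNReal.ofReal (hfun β u v L x) := by
  unfold hfun
  have hlog : Measurable Real.log := Real.measurable_log
  measurability

theorem sum_le_lint {β u v L : ℝ} (hβ1 : β ≤ 1) (hβ0 : 0 < β) (huv : 0 ≤ u + v)
    (hv1 : v ≤ 1) (hL : 0 ≤ L) :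
    ∑' n : ℕ, ENNReal.ofReal (hfun β u v L ((n:ℝ)+2)) ≤
      ∫⁻ x in Ioi (1:ℝ), ENNReal.ofReal (hfun β u v L x) := by
  have hdisj : Pairwise (Function.onFun Disjoint fun n : ℕ => Ioc ((n:ℝ)+1) ((n:ℝ)+2)) := by
    intro i j hij
    simp only [Function.onFun]
    rw [Set.Ioc_disjoint_Ioc]
    rcases Nat.lt_or_ge i j with h | h
    · have h1 : (i:ℝ) + 1 ≤ (j:ℝ) := by exact_mod_cast Nat.succ_le_of_lt h
      refine le_trans (min_le_left _ _) (le_trans (by linarith) (le_max_right _ _))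
    · have h' : j < i := lt_of_le_of_ne h (Ne.symm hij)
      have h1 : (j:ℝ) + 1 ≤ (i:ℝ) := by exact_mod_cast Nat.succ_le_of_lt h'
      refine le_trans (min_le_right _ _) (le_trans (by linarith) (le_max_left _ _))
  rw [← union_Ioc, lintegral_iUnion (fun n => measurableSet_Ioc) hdisj]
  refine ENNReal.tsum_le_tsum fun n => ?_
  have heq : ∫⁻ _ in Ioc ((n:ℝ)+1) ((n:ℝ)+2), ENNReal.ofReal (hfun β u v L ((n:ℝ)+2)) =
      ENNReal.ofReal (hfun β u v L ((n:ℝ)+2)) := by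
    rw [setLIntegral_const, Real.volume_Ioc]
    norm_num
  rw [← heq]
  refine setLIntegral_mono (hfun_meas β u v L) fun x hx => ?_
  refine ENNReal.ofReal_le_ofReal (hfun_anti hβ1 hβ0 huv hv1 hL ?_ hx.2)
  have : (0:ℝ) ≤ n := Nat.cast_nonneg n
  linarith [hx.1]

noncomputable def gfun (β u v L t : ℝ) : ℝ :=
  t ^ (β-1) / (L + t ^ β) ^ (u+v) * (L ^ u / t ^ (β*(1-v)))

theorem lint_exp {β u v L : ℝ} (hL : 0 < L) (hβ0 : 0 < β) :
    ∫⁻ x in Ioi (1:ℝ), ENNReal.ofReal (hfun β u v L x) =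
      ∫⁻ t in Ioi (0:ℝ), ENNReal.ofReal (gfun β u v L t) := by
  rw [← exp_image, lint_image measurableSet_Ioi
    (fun x _ => (Real.hasDerivAt_exp x).hasDerivWithinAt) Real.exp_injective.injOn _]
  refine setLIntegral_congr_fun measurableSet_Ioi (fun t ht => ?_)
  have ht0 : (0:ℝ) < t := ht
  have he : 0 < Real.exp t := Real.exp_pos t
  rw [abs_of_pos he, ← ENNReal.ofReal_mul he.le]
  congr 1
  unfold hfun gfun
  rw [Real.log_exp]
  have hb : (0:ℝ) < (L + t ^ β) ^ (u+v) := by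
    have : (0:ℝ) < t ^ β := Real.rpow_pos_of_pos ht0 _
    apply Real.rpow_pos_of_pos; linarith
  field_simp

theorem key_id {β u v L s : ℝ} (hβ0 : 0 < β) (hL : 0 < L) (hs : 0 < s) :
    (L * (s^2)⁻¹ * ((1/β) * (L*s⁻¹)^(1/β - 1))) * gfun β u v L ((L*s⁻¹)^(1/β))
      = (1/β) * (s^(u-1) * (1+s)^(-(u+v))) := by
  have hβ : β ≠ 0 := hβ0.ne'
  have hw : 0 < L * s⁻¹ := by positivity
  have ht : 0 < (L*s⁻¹)^(1/β) := Real.rpow_pos_of_pos hw _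
  have h1s : (0:ℝ) < 1 + s := by linarith
  have htβ : ((L*s⁻¹)^(1/β)) ^ β = L * s⁻¹ := by
    rw [← Real.rpow_mul hw.le, one_div, inv_mul_cancel₀ hβ, Real.rpow_one]
  unfold gfun
  rw [htβ]
  have hbase : L + L * s⁻¹ = (L * s⁻¹) * (1 + s) := by field_simp; ring
  rw [hbase]
  have hLHS : 0 < (L * (s^2)⁻¹ * ((1/β) * (L*s⁻¹)^(1/β - 1))) *
      (((L*s⁻¹)^(1/β)) ^ (β-1) / ((L * s⁻¹) * (1 + s)) ^ (u+v) *
        (L ^ u / ((L*s⁻¹)^(1/β)) ^ (β*(1-v)))) := by positivity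
  have hRHS : 0 < (1/β) * (s^(u-1) * (1+s)^(-(u+v))) := by positivity
  apply Real.log_injOn_pos (mem_Ioi.mpr hLHS) (mem_Ioi.mpr hRHS)
  repeat
    first
      | rw [Real.log_mul (by positivity) (by positivity)]
      | rw [Real.log_div (by positivity) (by positivity)]
      | rw [Real.log_inv]
      | rw [Real.log_rpow (by positivity)]
      | rw [Real.log_pow]
  simp only [Real.log_one]
  field_simp
  ring

theorem lint_sub {β u v L : ℝ} (hβ0 : 0 < β) (hL : 0 < L) :
    ∫⁻ t in Ioi (0:ℝ), ENNReal.ofReal (gfun β u v L t) =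
      ∫⁻ s in Ioi (0:ℝ), ENNReal.ofReal ((1/β) * (s^(u-1) * (1+s)^(-(u+v)))) := by
  have hβ : β ≠ 0 := hβ0.ne'
  have himg : (fun s : ℝ => (L*s⁻¹)^(1/β)) '' Ioi 0 = Ioi 0 := by
    ext t
    simp only [mem_image, mem_Ioi]
    constructor
    · rintro ⟨s, hs, rfl⟩
      exact Real.rpow_pos_of_pos (by positivity) _
    · intro ht
      have htβ : (0:ℝ) < t ^ β := Real.rpow_pos_of_pos ht _
      refine ⟨L / t ^ β, by positivity, ?_⟩
      have h1 : L * (L / t ^ β)⁻¹ = t ^ β := by field_simp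
      rw [h1, ← Real.rpow_mul ht.le, mul_one_div_cancel hβ, Real.rpow_one]
  have hderiv : ∀ s ∈ Ioi (0:ℝ), HasDerivWithinAt (fun s : ℝ => (L*s⁻¹)^(1/β))
      ((L * -(s^2)⁻¹) * (1/β) * (L*s⁻¹)^(1/β - 1)) (Ioi 0) s := by
    intro s hs
    have hs0 : (0:ℝ) < s := hs
    have hinner : HasDerivAt (fun s : ℝ => L * s⁻¹) (L * -(s^2)⁻¹) s :=
      (hasDerivAt_inv hs0.ne').const_mul L
    exact (hinner.rpow_const (Or.inl (by positivity))).hasDerivWithinAt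
  have hinj : InjOn (fun s : ℝ => (L*s⁻¹)^(1/β)) (Ioi 0) := by
    intro s1 hs1 s2 hs2 heq
    have h1 : L * s1⁻¹ = L * s2⁻¹ := by
      have hs1' : (0:ℝ) < s1 := hs1
      have hs2' : (0:ℝ) < s2 := hs2
      refine Real.rpow_left_injOn (x := 1/β) (by positivity) ?_ ?_ heq
      · show (0:ℝ) ≤ L * s1⁻¹; positivity
      · show (0:ℝ) ≤ L * s2⁻¹; positivity
    have := mul_left_cancel₀ hL.ne' h1
    exact inv_injective this
  calc ∫⁻ t in Ioi (0:ℝ), ENNReal.ofReal (gfun β u v L t)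
      = ∫⁻ t in (fun s : ℝ => (L*s⁻¹)^(1/β)) '' Ioi 0, ENNReal.ofReal (gfun β u v L t) := by
        rw [himg]
    _ = ∫⁻ s in Ioi (0:ℝ),
          ENNReal.ofReal |(L * -(s^2)⁻¹) * (1/β) * (L*s⁻¹)^(1/β - 1)| *
            ENNReal.ofReal (gfun β u v L ((L*s⁻¹)^(1/β))) := by
        rw [lint_image measurableSet_Ioi hderiv hinj]
    _ = ∫⁻ s in Ioi (0:ℝ), ENNReal.ofReal ((1/β) * (s^(u-1) * (1+s)^(-(u+v)))) := by
        refine setLIntegral_congr_fun measurableSet_Ioi (fun s hs => ?_)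
        have hs0 : (0:ℝ) < s := hs
        have habs : |(L * -(s^2)⁻¹) * (1/β) * (L*s⁻¹)^(1/β - 1)| =
            L * (s^2)⁻¹ * ((1/β) * (L*s⁻¹)^(1/β - 1)) := by
          rw [show (L * -(s^2)⁻¹) * (1/β) * (L*s⁻¹)^(1/β - 1) =
            -(L * (s^2)⁻¹ * ((1/β) * (L*s⁻¹)^(1/β - 1))) by ring, abs_neg,
            abs_of_nonneg (by positivity)]
        rw [habs, ← ENNReal.ofReal_mul (by positivity), key_id hβ0 hL hs0]

theorem integrable_beta {u v : ℝ} (hu : 0 < u) (hv : 0 < v) :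
    IntegrableOn (fun t : ℝ => t^(u-1) / (1+t)^(u+v)) (Ioi 0) := by
  have hmeas : Measurable fun t : ℝ => t^(u-1) / (1+t)^(u+v) := by
    have h1 : Measurable fun t : ℝ => 1 + t := measurable_const.add measurable_id
    measurability
  have h01 : IntegrableOn (fun t : ℝ => t^(u-1) / (1+t)^(u+v)) (Ioc 0 1) := by
    have hg : IntegrableOn (fun t : ℝ => t^(u-1)) (Ioc (0:ℝ) 1) :=
      (intervalIntegral.intervalIntegrable_rpow' (by linarith)).1
    refine hg.mono' hmeas.aestronglyMeasurable ?_
    refine (ae_restrict_iff' measurableSet_Ioc).2 (ae_of_all _ fun t ht => ?_)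
    have ht0 : (0:ℝ) < t := ht.1
    have hnum : (0:ℝ) ≤ t^(u-1) := Real.rpow_nonneg ht0.le _
    have hden : (1:ℝ) ≤ (1+t)^(u+v) := Real.one_le_rpow (by linarith) (by linarith)
    rw [Real.norm_eq_abs, abs_of_nonneg (by positivity)]
    calc t^(u-1) / (1+t)^(u+v) ≤ t^(u-1) / 1 :=
          div_le_div_of_nonneg_left hnum zero_lt_one hden |>.trans_eq rfl
    _ = t^(u-1) := div_one _
  have h1i : IntegrableOn (fun t : ℝ => t^(u-1) / (1+t)^(u+v)) (Ioi 1) := by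
    have hg : IntegrableOn (fun t : ℝ => t^(-1-v)) (Ioi (1:ℝ)) :=
      integrableOn_Ioi_rpow_of_lt (by linarith) zero_lt_one
    refine hg.mono' hmeas.aestronglyMeasurable ?_
    refine (ae_restrict_iff' measurableSet_Ioi).2 (ae_of_all _ fun t ht => ?_)
    have ht0 : (0:ℝ) < t := lt_trans zero_lt_one ht
    have ht1 : (1:ℝ) ≤ t := le_of_lt ht
    have hnum : (0:ℝ) ≤ t^(u-1) := Real.rpow_nonneg ht0.le _
    have hden : t^(u+v) ≤ (1+t)^(u+v) := Real.rpow_le_rpow ht0.le (by linarith) (by linarith)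
    have hdpos : (0:ℝ) < t^(u+v) := Real.rpow_pos_of_pos ht0 _
    rw [Real.norm_eq_abs, abs_of_nonneg (by positivity)]
    calc t^(u-1) / (1+t)^(u+v) ≤ t^(u-1) / t^(u+v) :=
          div_le_div_of_nonneg_left hnum hdpos hden
    _ = t^((u-1)-(u+v)) := (Real.rpow_sub ht0 _ _).symm
    _ = t^(-1-v) := by ring_nf
  have hsplit : Ioi (0:ℝ) = Ioc 0 1 ∪ Ioi 1 := (Ioc_union_Ioi_eq_Ioi zero_le_one).symm
  rw [hsplit]
  exact h01.union h1i

theorem lint_beta {β u v : ℝ} (hβ0 : 0 < β) (hu : 0 < u) (hv : 0 < v) :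
    ∫⁻ s in Ioi (0:ℝ), ENNReal.ofReal ((1/β) * (s^(u-1) * (1+s)^(-(u+v)))) =
      ENNReal.ofReal ((1/β) * betaFn u v) := by
  have hcongr : EqOn (fun s : ℝ => (1/β) * (s^(u-1) * (1+s)^(-(u+v))))
      (fun s : ℝ => (1/β) * (s^(u-1) / (1+s)^(u+v))) (Ioi 0) := by
    intro s hs
    have hs0 : (0:ℝ) < s := hs
    simp only
    rw [Real.rpow_neg (by linarith : (0:ℝ) ≤ 1 + s)]
    ring
  have hint : IntegrableOn (fun s : ℝ => (1/β) * (s^(u-1) * (1+s)^(-(u+v)))) (Ioi 0) := by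
    refine IntegrableOn.congr_fun ?_ hcongr.symm measurableSet_Ioi
    exact (integrable_beta hu hv).const_mul _
  rw [← ofReal_integral_eq_lintegral_ofReal hint]
  · congr 1
    rw [setIntegral_congr_fun measurableSet_Ioi hcongr, MeasureTheory.integral_const_mul]
    rfl
  · refine (ae_restrict_iff' measurableSet_Ioi).2 (ae_of_all _ fun s hs => ?_)
    have hs0 : (0:ℝ) < s := hs
    positivity

/-- **(Lemma 2.1, first bound.)** For every integer `m ≥ 2`,
`E(m) = ∑_{n≥2} (log n)^{β−1} / (n ((log m)^α + (log n)^β)^{1+(μ−ν)/p}) ·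
(log m)^{α(1+μ)/p} / (log n)^{β(1+ν)/p} ≤ (1/β) B((1+μ)/p, (p−1−ν)/p)`.
(The sum is taken in `ℝ≥0∞`, so convergence is part of the claim.) -/
theorem lemma_E_bound
    (p q α β μ ν : ℝ) (hp : 1 < p) (hq : 1 / p + 1 / q = 1)
    (hα0 : 0 < α) (hα1 : α ≤ 1) (hβ0 : 0 < β) (hβ1 : β ≤ 1)
    (hμ1 : -1 < μ) (hμ2 : μ < p - 1) (hν1 : -1 < ν) (hν2 : ν < p - 1)
    (m : ℕ) (hm : 2 ≤ m) :
    ∑' n : ℕ,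
        ENNReal.ofReal
          (Real.log ((n : ℝ) + 2) ^ (β - 1) /
              (((n : ℝ) + 2) *
                (Real.log m ^ α + Real.log ((n : ℝ) + 2) ^ β) ^ (1 + (μ - ν) / p)) *
            (Real.log m ^ (α * (1 + μ) / p) / Real.log ((n : ℝ) + 2) ^ (β * (1 + ν) / p)))
      ≤ ENNReal.ofReal ((1 / β) * betaFn ((1 + μ) / p) ((p - 1 - ν) / p)) := by
  have hp0 : (0:ℝ) < p := by linarith
  set u : ℝ := (1 + μ) / p with hu_def
  set v : ℝ := (p - 1 - ν) / p with hv_def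
  have hm1 : (1:ℝ) < (m:ℝ) := by
    have : (2:ℝ) ≤ (m:ℝ) := by exact_mod_cast hm
    linarith
  have hlm : 0 < Real.log m := Real.log_pos hm1
  set L : ℝ := Real.log m ^ α with hL_def
  have hL : 0 < L := Real.rpow_pos_of_pos hlm α
  have hu : 0 < u := div_pos (by linarith) hp0
  have hv : 0 < v := div_pos (by linarith) hp0
  have hv1 : v ≤ 1 := by
    rw [hv_def, div_le_one hp0]; linarith
  have huv : 0 ≤ u + v := by positivity
  have ha : 1 + (μ - ν) / p = u + v := by
    rw [hu_def, hv_def]; field_simp; ring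
  have hb : Real.log m ^ (α * (1 + μ) / p) = L ^ u := by
    rw [hu_def, hL_def, mul_div_assoc, Real.rpow_mul hlm.le]
  have hc : β * (1 + ν) / p = β * (1 - v) := by
    have h1 : (1:ℝ) - v = (1 + ν) / p := by rw [hv_def]; field_simp; ring
    rw [h1, mul_div_assoc]
  calc ∑' n : ℕ,
        ENNReal.ofReal
          (Real.log ((n : ℝ) + 2) ^ (β - 1) /
              (((n : ℝ) + 2) *
                (Real.log m ^ α + Real.log ((n : ℝ) + 2) ^ β) ^ (1 + (μ - ν) / p)) *
            (Real.log m ^ (α * (1 + μ) / p) / Real.log ((n : ℝ) + 2) ^ (β * (1 + ν) / p)))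
      = ∑' n : ℕ, ENNReal.ofReal (hfun β u v L ((n:ℝ)+2)) := by
        refine tsum_congr fun n => ?_
        unfold hfun
        rw [ha, hb, hc, hL_def]
    _ ≤ ∫⁻ x in Ioi (1:ℝ), ENNReal.ofReal (hfun β u v L x) :=
        sum_le_lint hβ1 hβ0 huv hv1 hL.le
    _ = ∫⁻ t in Ioi (0:ℝ), ENNReal.ofReal (gfun β u v L t) := lint_exp hL hβ0
    _ = ∫⁻ s in Ioi (0:ℝ), ENNReal.ofReal ((1/β) * (s^(u-1) * (1+s)^(-(u+v)))) :=
        lint_sub hβ0 hL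
    _ = ENNReal.ofReal ((1 / β) * betaFn u v) := lint_beta hβ0 hu hv
end

section
/- Let p > 1, 0 < α ≤ 1, 0 < β ≤ 1, and −1 < μ, ν < p−1. For every integer n ≥ 2, Σ_{m=2}^∞ [ (log m)^{α−1} / ( m · ((log m)^α + (log n)^β)^{1+(μ−ν)/p} ) ] · (log n)^{β(p−1−ν)/p} / (log m)^{α(p−1−μ)/p} ≤ (1/α) · B((1+μ)/p, (p−1−ν)/p), where B denotes the Beta function and p' is the conjugate exponent of p. -/
open scoped ENNReal

private lemma cgroup_aux (α a b c : ℝ) (hα : α ≠ 0) (hc : 0 < c) :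
    c ^ (1/α - 1) * c * c ^ b * c ^ (a - 1/α) * c ^ (-(a+b)) = 1 := by
  nth_rewrite 2 [← Real.rpow_one c]
  rw [← Real.rpow_add hc, ← Real.rpow_add hc, ← Real.rpow_add hc, ← Real.rpow_add hc,
    show (1/α - 1 + 1 + b + (a - 1/α) + -(a+b)) = (0:ℝ) by ring, Real.rpow_zero]

private lemma hpt_aux (α a b c u : ℝ) (hα0 : 0 < α) (hc : 0 < c) (hu0 : 0 < u) :
    |Real.exp ((c*u) ^ (1/α)) * (1/α * (c*u) ^ (1/α - 1) * c)| *
      (c ^ b * (((c*u)^(1/α)) ^ (α*a - 1) * ((((c*u)^(1/α))) ^ α + c) ^ (-(a+b))) /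
        Real.exp ((c*u)^(1/α)))
    = 1/α * (u ^ (a-1) / (1+u) ^ (a+b)) := by
  have hP : 0 < c * u := mul_pos hc hu0
  have h1u : (0:ℝ) < 1 + u := by linarith
  have ht : 0 < (c*u) ^ (1/α) := Real.rpow_pos_of_pos hP _
  have hE : (0:ℝ) < Real.exp ((c*u) ^ (1/α)) := Real.exp_pos _
  have e1 : ((c*u) ^ (1/α)) ^ α = c * u := by
    rw [← Real.rpow_mul hP.le, one_div_mul_cancel hα0.ne', Real.rpow_one]
  have e2 : ((c*u) ^ (1/α)) ^ (α*a - 1) = c ^ (a - 1/α) * u ^ (a - 1/α) := by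
    rw [← Real.rpow_mul hP.le, show 1/α * (α*a - 1) = a - 1/α by field_simp,
      Real.mul_rpow hc.le hu0.le]
  have e3 : (c*u) ^ (1/α - 1) = c ^ (1/α - 1) * u ^ (1/α - 1) :=
    Real.mul_rpow hc.le hu0.le
  have e4 : (c * u + c) ^ (-(a+b)) = c ^ (-(a+b)) * (1+u) ^ (-(a+b)) := by
    rw [show c * u + c = c * (1+u) by ring, Real.mul_rpow hc.le h1u.le]
  have hcgroup := cgroup_aux α a b c hα0.ne' hc
  have hugroup : u ^ (1/α - 1) * u ^ (a - 1/α) = u ^ (a - 1) := by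
    rw [← Real.rpow_add hu0]; congr 1; ring
  rw [abs_of_pos (by positivity), e2, e1, e3, e4, Real.rpow_neg h1u.le (a+b), ← hugroup,
    ← mul_div_assoc, div_eq_iff hE.ne']
  linear_combination (1/α * Real.exp ((c*u) ^ (1/α)) * (u ^ (1/α - 1) * u ^ (a - 1/α)) *
    ((1+u) ^ (a+b))⁻¹) * hcgroup

/-- **(Lemma 2.1, second bound.)** For every integer `n ≥ 2`,
`F(n) = ∑_{m≥2} (log m)^{α−1} / (m ((log m)^α + (log n)^β)^{1+(μ−ν)/p}) ·
(log n)^{β(p−1−ν)/p} / (log m)^{α(p−1−μ)/p} ≤ (1/α) B((1+μ)/p, (p−1−ν)/p)`.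
(The sum is taken in `ℝ≥0∞`, so convergence is part of the claim.) -/
theorem lemma_F_bound
    (p q α β μ ν : ℝ) (hp : 1 < p) (hq : 1 / p + 1 / q = 1)
    (hα0 : 0 < α) (hα1 : α ≤ 1) (hβ0 : 0 < β) (hβ1 : β ≤ 1)
    (hμ1 : -1 < μ) (hμ2 : μ < p - 1) (hν1 : -1 < ν) (hν2 : ν < p - 1)
    (n : ℕ) (hn : 2 ≤ n) :
    ∑' m : ℕ,
        ENNReal.ofReal
          (Real.log ((m : ℝ) + 2) ^ (α - 1) /
              (((m : ℝ) + 2) *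
                (Real.log ((m : ℝ) + 2) ^ α + Real.log n ^ β) ^ (1 + (μ - ν) / p)) *
            (Real.log n ^ (β * (p - 1 - ν) / p) /
              Real.log ((m : ℝ) + 2) ^ (α * (p - 1 - μ) / p)))
      ≤ ENNReal.ofReal ((1 / α) * betaFn ((1 + μ) / p) ((p - 1 - ν) / p)) := by
  have hp0 : (0:ℝ) < p := by linarith
  have hLn : (0:ℝ) < Real.log n := Real.log_pos (by exact_mod_cast hn.trans_lt' one_lt_two)
  set c : ℝ := Real.log n ^ β with hc_def
  have hc : 0 < c := Real.rpow_pos_of_pos hLn β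
  set a : ℝ := (1 + μ) / p with ha_def
  set b : ℝ := (p - 1 - ν) / p with hb_def
  set s : ℝ := 1 + (μ - ν) / p with hs_def
  have ha : 0 < a := by apply div_pos <;> linarith
  have ha1 : a < 1 := by rw [ha_def, div_lt_one hp0]; linarith
  have hb : 0 < b := by apply div_pos <;> linarith
  have hsab : s = a + b := by rw [hs_def, ha_def, hb_def]; field_simp; ring
  have hs0 : 0 < s := by rw [hsab]; linarith
  set g₀ : ℝ → ℝ := fun x =>
    c ^ b * (Real.log x ^ (α * a - 1) * (Real.log x ^ α + c) ^ (-s)) / x with hg₀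
  -- the summand equals g₀
  have hGeq : ∀ x : ℝ, 2 ≤ x →
      Real.log x ^ (α - 1) / (x * (Real.log x ^ α + c) ^ s) *
        (Real.log n ^ (β * (p - 1 - ν) / p) / Real.log x ^ (α * (p - 1 - μ) / p))
      = g₀ x := by
    intro x hx
    have hL : 0 < Real.log x := Real.log_pos (by linarith)
    have hD : 0 < Real.log x ^ α + c := by positivity
    have e1 : Real.log n ^ (β * (p - 1 - ν) / p) = c ^ b := by
      rw [hc_def, hb_def, ← Real.rpow_mul hLn.le]
      congr 1; ring
    have e2 : Real.log x ^ (α * a - 1)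
        = Real.log x ^ (α - 1) / Real.log x ^ (α * (p - 1 - μ) / p) := by
      rw [← Real.rpow_sub hL]
      congr 1
      rw [ha_def]; field_simp; ring
    rw [e1]; simp only [hg₀]; rw [e2, Real.rpow_neg hD.le]
    ring
  -- g₀ is antitone on Ioi 1
  have hmono : ∀ x y : ℝ, 1 < x → x ≤ y → g₀ y ≤ g₀ x := by
    intro x y hx hxy
    have hLx : 0 < Real.log x := Real.log_pos hx
    have hLxy : Real.log x ≤ Real.log y := Real.log_le_log (by linarith) hxy
    have hLy : 0 < Real.log y := lt_of_lt_of_le hLx hLxy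
    have he : α * a - 1 ≤ 0 := by nlinarith
    have h1 : Real.log y ^ (α * a - 1) ≤ Real.log x ^ (α * a - 1) :=
      Real.rpow_le_rpow_of_nonpos hLx hLxy he
    have h2 : (Real.log y ^ α + c) ^ (-s) ≤ (Real.log x ^ α + c) ^ (-s) := by
      apply Real.rpow_le_rpow_of_nonpos (by positivity) _ (by linarith)
      have := Real.rpow_le_rpow hLx.le hLxy hα0.le
      linarith
    rw [hg₀]
    apply div_le_div₀ (by positivity)
      (mul_le_mul_of_nonneg_left (mul_le_mul h1 h2 (by positivity) (by positivity))
        (by positivity)) (by linarith) hxy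
  -- the ENNReal-valued integrand
  set G : ℝ → ℝ≥0∞ := fun x => ENNReal.ofReal (g₀ x) with hG
  -- the union of intervals
  have hunion : (⋃ m : ℕ, Set.Ioc ((m:ℝ)+1) ((m:ℝ)+2)) = Set.Ioi 1 := by
    ext x
    simp only [Set.mem_iUnion, Set.mem_Ioc, Set.mem_Ioi]
    constructor
    · rintro ⟨m, h1, h2⟩
      have : (0:ℝ) ≤ m := Nat.cast_nonneg m
      linarith
    · intro hx
      have hx0 : (0:ℝ) ≤ x := by linarith
      have h2 : 2 ≤ ⌈x⌉₊ := by
        have : 1 < ⌈x⌉₊ := by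
          rw [Nat.lt_ceil]; exact_mod_cast hx
        omega
      have hcast : ((⌈x⌉₊ - 2 : ℕ) : ℝ) = (⌈x⌉₊ : ℝ) - 2 := by
        push_cast [h2]; ring
      refine ⟨⌈x⌉₊ - 2, ?_, ?_⟩
      · rw [hcast]
        have := Nat.ceil_lt_add_one hx0
        linarith
      · rw [hcast]
        have := Nat.le_ceil x
        linarith
  -- step A : sum ≤ integral over (1, ∞)
  have hsum_le : (∑' m : ℕ, G ((m:ℝ)+2)) ≤ ∫⁻ x in Set.Ioi (1:ℝ), G x := by
    have key : ∀ m : ℕ, G ((m:ℝ)+2) ≤ ∫⁻ x in Set.Ioc ((m:ℝ)+1) ((m:ℝ)+2), G x := by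
      intro m
      have h0 : G ((m:ℝ)+2) = ∫⁻ _ in Set.Ioc ((m:ℝ)+1) ((m:ℝ)+2), G ((m:ℝ)+2) := by
        rw [MeasureTheory.setLIntegral_const, Real.volume_Ioc]
        norm_num
      rw [h0]
      refine MeasureTheory.setLIntegral_mono' measurableSet_Ioc fun x hx => ?_
      have h1x : 1 < x := by
        have h0m : (0:ℝ) ≤ m := Nat.cast_nonneg m
        have := hx.1; linarith
      exact ENNReal.ofReal_le_ofReal (hmono x ((m:ℝ)+2) h1x hx.2)
    calc (∑' m : ℕ, G ((m:ℝ)+2)) ≤ ∑' m : ℕ, ∫⁻ x in Set.Ioc ((m:ℝ)+1) ((m:ℝ)+2), G x :=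
          ENNReal.tsum_le_tsum key
      _ = ∫⁻ x in ⋃ m : ℕ, Set.Ioc ((m:ℝ)+1) ((m:ℝ)+2), G x := by
          refine (MeasureTheory.lintegral_iUnion (fun m => measurableSet_Ioc) ?_ G).symm
          intro i j hij
          rcases hij.lt_or_gt with h | h
          · refine Set.Ioc_disjoint_Ioc.2 ?_
            have : (i:ℝ) + 1 ≤ j := by exact_mod_cast Nat.succ_le_of_lt h
            exact le_trans (min_le_left _ _) (le_trans (by linarith) (le_max_right _ _))
          · refine Set.Ioc_disjoint_Ioc.2 ?_
            have : (j:ℝ) + 1 ≤ i := by exact_mod_cast Nat.succ_le_of_lt h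
            exact le_trans (min_le_right _ _) (le_trans (by linarith) (le_max_left _ _))
      _ = ∫⁻ x in Set.Ioi (1:ℝ), G x := by rw [hunion]
  -- step B : change of variables
  set φ : ℝ → ℝ := fun u => Real.exp ((c*u) ^ (1/α)) with hφ
  set φ' : ℝ → ℝ := fun u => Real.exp ((c*u) ^ (1/α)) * (1/α * (c*u) ^ (1/α - 1) * c) with hφ'
  have hderiv : ∀ u ∈ Set.Ioi (0:ℝ), HasDerivWithinAt φ (φ' u) (Set.Ioi 0) u := by
    intro u hu
    have hP : 0 < c * u := mul_pos hc hu
    have h1 : HasDerivAt (fun v : ℝ => c * v) c u := by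
      simpa using (hasDerivAt_id u).const_mul c
    have h2 : HasDerivAt (fun v : ℝ => (c * v) ^ (1/α)) (1/α * (c*u) ^ (1/α - 1) * c) u :=
      (Real.hasDerivAt_rpow_const (Or.inl hP.ne')).comp u h1
    exact h2.exp.hasDerivWithinAt
  have hinj : Set.InjOn φ (Set.Ioi 0) := by
    intro u hu v hv huv
    have h1 : (c*u) ^ (1/α) = (c*v) ^ (1/α) := Real.exp_injective huv
    have h2 : c * u = c * v :=
      Real.rpow_left_injOn (x := 1/α) (by positivity)
        (Set.mem_setOf.2 (mul_pos hc hu).le) (Set.mem_setOf.2 (mul_pos hc hv).le) h1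
    exact mul_left_cancel₀ hc.ne' h2
  have himg : φ '' Set.Ioi 0 = Set.Ioi 1 := by
    ext x
    simp only [Set.mem_image, Set.mem_Ioi]
    constructor
    · rintro ⟨u, hu, rfl⟩
      have hP : 0 < c * u := mul_pos hc hu
      have h0 : 0 < (c*u) ^ (1/α) := Real.rpow_pos_of_pos hP _
      calc (1:ℝ) = Real.exp 0 := Real.exp_zero.symm
        _ < _ := Real.exp_lt_exp.2 h0
    · intro hx
      have hL : 0 < Real.log x := Real.log_pos hx
      refine ⟨Real.log x ^ α / c, by positivity, ?_⟩
      simp only [hφ]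
      rw [show c * (Real.log x ^ α / c) = Real.log x ^ α by field_simp,
        ← Real.rpow_mul hL.le, mul_one_div_cancel hα0.ne', Real.rpow_one,
        Real.exp_log (by linarith)]
  -- pointwise identity
  have hpt : ∀ u ∈ Set.Ioi (0:ℝ),
      |φ' u| • g₀ (φ u) = (1/α) * (u ^ (a-1) / (1+u) ^ (a+b)) := by
    intro u hu
    have hu0 : (0:ℝ) < u := hu
    simp only [hφ, hφ', hg₀, smul_eq_mul, Real.log_exp]
    rw [hsab]
    exact hpt_aux α a b c u hα0 hc hu0
  -- integrability of the Beta integrand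
  set h : ℝ → ℝ := fun t => t ^ (a-1) / (1+t) ^ (a+b) with hh
  have hmeas_h : Measurable h := by
    simp only [hh]
    exact (measurable_id.pow_const (a-1)).div
      ((measurable_const.add measurable_id).pow_const (a+b))
  have hInt : MeasureTheory.IntegrableOn h (Set.Ioi 0) := by
    rw [show Set.Ioi (0:ℝ) = Set.Ioc 0 1 ∪ Set.Ioi 1 from (Set.Ioc_union_Ioi_eq_Ioi zero_le_one).symm]
    apply MeasureTheory.IntegrableOn.union
    · have hbase : MeasureTheory.IntegrableOn (fun t : ℝ => t ^ (a-1)) (Set.Ioc 0 1) := by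
        rw [← intervalIntegrable_iff_integrableOn_Ioc_of_le zero_le_one]
        exact intervalIntegral.intervalIntegrable_rpow' (by linarith)
      refine hbase.mono' hmeas_h.aestronglyMeasurable ?_
      filter_upwards [MeasureTheory.ae_restrict_mem measurableSet_Ioc] with t htm
      have ht0 : 0 < t := htm.1
      rw [Real.norm_eq_abs, abs_of_nonneg (by positivity)]
      simp only [hh]
      exact div_le_self (Real.rpow_nonneg ht0.le _)
        (Real.one_le_rpow (by linarith) (by linarith))
    · have hbase : MeasureTheory.IntegrableOn (fun t : ℝ => t ^ (-1-b)) (Set.Ioi 1) :=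
        integrableOn_Ioi_rpow_of_lt (by linarith) one_pos
      refine hbase.mono' hmeas_h.aestronglyMeasurable ?_
      filter_upwards [MeasureTheory.ae_restrict_mem measurableSet_Ioi] with t htm
      have ht1 : (1:ℝ) < t := htm
      have ht0 : (0:ℝ) < t := by linarith
      rw [Real.norm_eq_abs, abs_of_nonneg (by positivity)]
      simp only [hh]
      calc t ^ (a-1) / (1+t) ^ (a+b) ≤ t ^ (a-1) / t ^ (a+b) := by
            apply div_le_div_of_nonneg_left (by positivity) (by positivity)
            exact Real.rpow_le_rpow ht0.le (by linarith) (by linarith)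
        _ = t ^ (-1-b) := by
            rw [← Real.rpow_sub ht0]; congr 1; ring
  -- transport integrability to g₀ on (1, ∞)
  have hInt2 : MeasureTheory.IntegrableOn (fun u => |φ' u| • g₀ (φ u)) (Set.Ioi 0) := by
    exact MeasureTheory.IntegrableOn.congr_fun (hInt.const_mul (1/α))
      (fun u hu => (hpt u hu).symm) measurableSet_Ioi
  have hInt' : MeasureTheory.IntegrableOn g₀ (Set.Ioi 1) := by
    rw [← himg,
      MeasureTheory.integrableOn_image_iff_integrableOn_abs_deriv_smul
        measurableSet_Ioi hderiv hinj]
    exact hInt2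
  have hg0nn : 0 ≤ᵐ[MeasureTheory.volume.restrict (Set.Ioi 1)] g₀ := by
    filter_upwards [MeasureTheory.ae_restrict_mem measurableSet_Ioi] with x hx
    have hL : 0 < Real.log x := Real.log_pos hx
    have hx0 : (0:ℝ) < x := by linarith [Set.mem_Ioi.1 hx]
    simp only [hg₀]
    positivity
  have hval : ∫ x in Set.Ioi (1:ℝ), g₀ x = (1/α) * betaFn a b := by
    rw [← himg,
      MeasureTheory.integral_image_eq_integral_abs_deriv_smul measurableSet_Ioi hderiv hinj,
      MeasureTheory.setIntegral_congr_fun measurableSet_Ioi hpt,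
      MeasureTheory.integral_const_mul]
    rfl
  -- assemble
  have hstep : (∫⁻ x in Set.Ioi (1:ℝ), G x)
      = ENNReal.ofReal ((1/α) * betaFn a b) := by
    rw [hG, ← MeasureTheory.ofReal_integral_eq_lintegral_ofReal hInt' hg0nn, hval]
  calc (∑' m : ℕ,
        ENNReal.ofReal
          (Real.log ((m : ℝ) + 2) ^ (α - 1) /
              (((m : ℝ) + 2) * (Real.log ((m : ℝ) + 2) ^ α + c) ^ s) *
            (Real.log n ^ (β * (p - 1 - ν) / p) /
              Real.log ((m : ℝ) + 2) ^ (α * (p - 1 - μ) / p))))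
      = ∑' m : ℕ, G ((m:ℝ)+2) := by
        refine tsum_congr fun m => ?_
        have h2m : (2:ℝ) ≤ (m:ℝ) + 2 := by
          have : (0:ℝ) ≤ m := Nat.cast_nonneg m
          linarith
        rw [hG, hGeq ((m:ℝ)+2) h2m]
    _ ≤ ∫⁻ x in Set.Ioi (1:ℝ), G x := hsum_le
    _ = ENNReal.ofReal ((1/α) * betaFn a b) := hstep
end

section
/- Let 0 < α ≤ 1. Then ε · Σ_{m=2}^∞ (log m)^{−1−αε} / m tends to 1/α as ε → 0⁺. -/
open scoped Topology

open Real MeasureTheory Filter Set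

private lemma eps_aux_deriv {s : ℝ} (hs : 0 < s) {x : ℝ} (hx : 2 ≤ x) :
    HasDerivAt (fun y : ℝ => -Real.log y ^ (-s) / s)
      (Real.log x ^ (-(1 + s)) / x) x := by
  have hx0 : (0:ℝ) < x := by linarith
  have hlog : 0 < Real.log x := Real.log_pos (by linarith)
  have h1 : HasDerivAt (fun y : ℝ => Real.log y ^ (-s))
      (x⁻¹ * (-s) * Real.log x ^ (-s - 1)) x :=
    (Real.hasDerivAt_log hx0.ne').rpow_const (Or.inl hlog.ne')
  have h2 := (h1.neg).div_const s
  refine h2.congr_deriv ?_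
  rw [show -(1+s) = -s - 1 by ring]
  field_simp

private lemma eps_aux_anti {s : ℝ} (hs : 0 < s) :
    AntitoneOn (fun y : ℝ => Real.log y ^ (-(1 + s)) / y) (Set.Ici 2) := by
  intro a ha b hb hab
  have ha2 : (2:ℝ) ≤ a := ha
  have hla : 0 < Real.log a := Real.log_pos (by linarith)
  have hlb : 0 < Real.log b := Real.log_pos (by linarith)
  have h1 : Real.log b ^ (-(1+s)) ≤ Real.log a ^ (-(1+s)) :=
    Real.rpow_le_rpow_of_nonpos hla (Real.log_le_log (by linarith) hab) (by linarith)
  exact div_le_div₀ (Real.rpow_nonneg hla.le _) h1 (by linarith) hab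

private lemma eps_aux_tendsto_zero {s : ℝ} (hs : 0 < s) :
    Tendsto (fun y : ℝ => -Real.log y ^ (-s) / s) atTop (𝓝 0) := by
  have h := ((tendsto_rpow_neg_atTop hs).comp Real.tendsto_log_atTop).neg.div_const s
  simpa using h

private lemma eps_aux_nonneg {s : ℝ} {x : ℝ} (hx : (2:ℝ) ≤ x) :
    0 ≤ Real.log x ^ (-(1 + s)) / x :=
  div_nonneg (Real.rpow_nonneg (Real.log_nonneg (by linarith)) _) (by linarith)

private lemma eps_aux_integrable {s : ℝ} (hs : 0 < s) :
    IntegrableOn (fun x : ℝ => Real.log x ^ (-(1 + s)) / x) (Set.Ioi 2) :=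
  integrableOn_Ioi_deriv_of_nonneg' (fun x hx => eps_aux_deriv hs hx)
    (fun x hx => eps_aux_nonneg (le_of_lt hx)) (eps_aux_tendsto_zero hs)

private lemma eps_aux_integral {s : ℝ} (hs : 0 < s) :
    (∫ x in Set.Ioi (2:ℝ), Real.log x ^ (-(1 + s)) / x) = Real.log 2 ^ (-s) / s := by
  rw [integral_Ioi_of_hasDerivAt_of_nonneg' (fun x hx => eps_aux_deriv hs hx)
    (fun x hx => eps_aux_nonneg (le_of_lt hx)) (eps_aux_tendsto_zero hs)]
  ring

/-- For `0 < α ≤ 1`, `ε ∑_{m≥2} (log m)^{-1-αε} / m → 1/α` as `ε → 0⁺`. -/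
theorem eps_sum_tendsto (α : ℝ) (hα0 : 0 < α) (hα1 : α ≤ 1) :
    Filter.Tendsto
      (fun ε : ℝ => ε * ∑' m : ℕ, Real.log ((m : ℝ) + 2) ^ (-(1 + α * ε)) / ((m : ℝ) + 2))
      (𝓝[>] 0) (𝓝 (1 / α)) := by
  -- notation
  set F : ℝ → ℝ → ℝ := fun s x => Real.log x ^ (-(1 + s)) / x with hF
  -- lower and upper comparison functions
  have key : ∀ ε : ℝ, 0 < ε →
      Real.log 2 ^ (-(α * ε)) / α ≤
        ε * ∑' m : ℕ, Real.log ((m : ℝ) + 2) ^ (-(1 + α * ε)) / ((m : ℝ) + 2) ∧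
      ε * ∑' m : ℕ, Real.log ((m : ℝ) + 2) ^ (-(1 + α * ε)) / ((m : ℝ) + 2) ≤
        ε * (Real.log 2 ^ (-(1 + α * ε)) / 2) + Real.log 2 ^ (-(α * ε)) / α := by
    intro ε hε
    set s := α * ε with hsdef
    have hs : 0 < s := mul_pos hα0 hε
    have hInt : (∫ x in Set.Ioi (2:ℝ), F s x) = Real.log 2 ^ (-s) / s := eps_aux_integral hs
    have hIntg : IntegrableOn (F s) (Set.Ioi 2) := eps_aux_integrable hs
    have hanti := eps_aux_anti hs
    -- interval integrals are bounded by the improper integral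
    have hIle : ∀ n : ℕ, (∫ x in (2:ℝ)..(2 + n), F s x) ≤ ∫ x in Set.Ioi (2:ℝ), F s x := by
      intro n
      rw [intervalIntegral.integral_of_le (le_add_of_nonneg_right (Nat.cast_nonneg n))]
      apply setIntegral_mono_set hIntg
      · filter_upwards [ae_restrict_mem measurableSet_Ioi] with x hx
        exact eps_aux_nonneg (le_of_lt hx)
      · exact Filter.Eventually.of_forall (fun x hx => hx.1)
    -- partial sums bounded above
    have hsum_le : ∀ n : ℕ, (∑ i ∈ Finset.range n, F s ((i : ℝ) + 2)) ≤
        F s 2 + ∫ x in Set.Ioi (2:ℝ), F s x := by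
      intro n
      cases n with
      | zero =>
        simp only [Finset.range_zero, Finset.sum_empty]
        have h1 : 0 ≤ F s 2 := eps_aux_nonneg le_rfl
        have h2 : 0 ≤ ∫ x in Set.Ioi (2:ℝ), F s x :=
          setIntegral_nonneg measurableSet_Ioi (fun x hx => eps_aux_nonneg (le_of_lt hx))
        linarith
      | succ k =>
        rw [Finset.sum_range_succ']
        have h1 : (∑ i ∈ Finset.range k, F s (2 + ((i + 1 : ℕ) : ℝ))) ≤
            ∫ x in (2:ℝ)..(2 + k), F s x :=
          AntitoneOn.sum_le_integral (x₀ := 2) (a := k) (f := F s)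
            (hanti.mono (Set.Icc_subset_Ici_self))
        have h2 : (∑ i ∈ Finset.range k, F s (((i + 1 : ℕ) : ℝ) + 2)) =
            ∑ i ∈ Finset.range k, F s (2 + ((i + 1 : ℕ) : ℝ)) := by
          apply Finset.sum_congr rfl
          intro i _
          congr 1
          ring
        have h3 : F s (((0:ℕ):ℝ) + 2) = F s 2 := by norm_num
        rw [h2, h3]
        have := hIle k
        linarith
    have hnonneg : ∀ i : ℕ, 0 ≤ F s ((i : ℝ) + 2) := fun i =>
      eps_aux_nonneg (le_add_of_nonneg_left (Nat.cast_nonneg i))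
    have hsummable : Summable (fun m : ℕ => F s ((m : ℝ) + 2)) :=
      summable_of_sum_range_le hnonneg hsum_le
    -- upper bound on tsum
    have htsum_le : (∑' m : ℕ, F s ((m : ℝ) + 2)) ≤ F s 2 + ∫ x in Set.Ioi (2:ℝ), F s x :=
      tsum_le_of_sum_range_le hnonneg hsum_le
    -- lower bound on tsum
    have hint_le : (∫ x in Set.Ioi (2:ℝ), F s x) ≤ ∑' m : ℕ, F s ((m : ℝ) + 2) := by
      have hlim : Tendsto (fun n : ℕ => ∫ x in (2:ℝ)..(2 + n), F s x) atTop
          (𝓝 (∫ x in Set.Ioi (2:ℝ), F s x)) := by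
        apply intervalIntegral_tendsto_integral_Ioi _ hIntg
        exact tendsto_atTop_add_const_left _ 2 tendsto_natCast_atTop_atTop
      refine le_of_tendsto hlim (Filter.Eventually.of_forall fun n => ?_)
      have h1 : (∫ x in (2:ℝ)..(2 + n), F s x) ≤ ∑ i ∈ Finset.range n, F s (2 + (i:ℝ)) :=
        AntitoneOn.integral_le_sum (hanti.mono (Set.Icc_subset_Ici_self))
      have h2 : (∑ i ∈ Finset.range n, F s (2 + (i:ℝ))) ≤ ∑' m : ℕ, F s ((m : ℝ) + 2) := by
        have := Summable.sum_le_tsum (Finset.range n) (fun i _ => hnonneg i) hsummable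
        refine le_trans (le_of_eq ?_) this
        apply Finset.sum_congr rfl
        intro i hi
        ring_nf
      linarith
    constructor
    · have h := mul_le_mul_of_nonneg_left hint_le hε.le
      rw [hInt] at h
      have heq : ε * (Real.log 2 ^ (-s) / s) = Real.log 2 ^ (-(α * ε)) / α := by
        rw [hsdef]
        field_simp
      rw [heq] at h
      exact h
    · have h := mul_le_mul_of_nonneg_left htsum_le hε.le
      rw [hInt] at h
      have heq : ε * (F s 2 + Real.log 2 ^ (-s) / s) =
          ε * (Real.log 2 ^ (-(1 + α * ε)) / 2) + Real.log 2 ^ (-(α * ε)) / α := by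
        rw [hF, hsdef]
        simp only []
        field_simp
      rw [heq] at h
      exact h
  -- limits of the bounding functions
  have hlog2 : Real.log 2 ≠ 0 := ne_of_gt (Real.log_pos one_lt_two)
  have hc1 : Tendsto (fun ε : ℝ => Real.log 2 ^ (-(α * ε)) / α) (𝓝[>] 0) (𝓝 (1 / α)) := by
    have : ContinuousAt (fun ε : ℝ => Real.log 2 ^ (-(α * ε)) / α) 0 := by
      apply ContinuousAt.div_const
      exact (Real.continuousAt_const_rpow hlog2).comp (by fun_prop)
    have h := this.tendsto.mono_left (nhdsWithin_le_nhds (s := Set.Ioi (0:ℝ)))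
    simpa using h
  have hc2 : Tendsto (fun ε : ℝ => ε * (Real.log 2 ^ (-(1 + α * ε)) / 2) +
      Real.log 2 ^ (-(α * ε)) / α) (𝓝[>] 0) (𝓝 (1 / α)) := by
    have h1 : Tendsto (fun ε : ℝ => ε * (Real.log 2 ^ (-(1 + α * ε)) / 2)) (𝓝[>] 0) (𝓝 0) := by
      have : ContinuousAt (fun ε : ℝ => ε * (Real.log 2 ^ (-(1 + α * ε)) / 2)) 0 := by
        apply ContinuousAt.mul continuousAt_id
        apply ContinuousAt.div_const
        exact (Real.continuousAt_const_rpow hlog2).comp (by fun_prop)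
      have h := this.tendsto.mono_left (nhdsWithin_le_nhds (s := Set.Ioi (0:ℝ)))
      simpa using h
    have h := h1.add hc1
    simpa using h
  refine tendsto_of_tendsto_of_tendsto_of_le_of_le' hc1 hc2 ?_ ?_
  · filter_upwards [self_mem_nhdsWithin] with ε hε
    exact (key ε hε).1
  · filter_upwards [self_mem_nhdsWithin] with ε hε
    exact (key ε hε).2
end
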